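/- arXiv:1504.04678 — 5 statements merged into one kernel-verified Lean document; each statement's English description precedes it below -/
import Mathlib

section
/- Let (N,ν) be a measure space, 1 < p < ∞, α > 0, and u ∈ L^p(N). Then ∫_{{|u|≥1}} e^{α|u|^{p'}} dν − e^α ‖u‖_p^p ≤ ∫_N (e^{α|u|^{p'}} − Σ_{k=0}^{⌈p-2⌉} α^k |u|^{k p'}/k!) dν ≤ ∫_{{|u|≥1}} e^{α|u|^{p'}} dν + e^α ‖u‖_p^p, where p' = p/(p-1) and ⌈p-2⌉ is the smallest integer ≥ p-2. -/
open MeasureTheory Real ENNReal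

lemma tail_bound {a t : ℝ} (ha : 0 ≤ a) (ht0 : 0 ≤ t) (ht1 : t ≤ 1) (n : ℕ) :
    Real.exp (a * t) - ∑ k ∈ Finset.range n, (a * t) ^ k / (Nat.factorial k)
      ≤ t ^ n * Real.exp a := by
  have hexp : ∀ y : ℝ, Real.exp y = ∑' k : ℕ, y ^ k / (Nat.factorial k) := by
    intro y
    rw [Real.exp_eq_exp_ℝ, NormedSpace.exp_eq_tsum_div]
  have hs1 : Summable (fun k : ℕ => (a * t) ^ k / (Nat.factorial k)) :=
    Real.summable_pow_div_factorial _
  have hs2 : Summable (fun k : ℕ => a ^ k / (Nat.factorial k)) :=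
    Real.summable_pow_div_factorial _
  have h1 := Summable.sum_add_tsum_nat_add n hs1
  have h2 := Summable.sum_add_tsum_nat_add n hs2
  rw [← hexp] at h1 h2
  have heq : Real.exp (a * t) - ∑ k ∈ Finset.range n, (a * t) ^ k / (Nat.factorial k)
      = ∑' k : ℕ, (a * t) ^ (k + n) / (Nat.factorial (k + n)) := by linarith
  rw [heq]
  have hstep : ∑' k : ℕ, (a * t) ^ (k + n) / (Nat.factorial (k + n))
      ≤ ∑' k : ℕ, t ^ n * (a ^ (k + n) / (Nat.factorial (k + n))) := by
    refine Summable.tsum_le_tsum (fun k => ?_) ((summable_nat_add_iff n).mpr hs1)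
      (((summable_nat_add_iff n).mpr hs2).mul_left _)
    have htle : t ^ (k + n) ≤ t ^ n := pow_le_pow_of_le_one ht0 ht1 (Nat.le_add_left n k)
    rw [mul_pow]
    rw [show t ^ n * (a ^ (k + n) / (Nat.factorial (k+n)))
        = a ^ (k + n) * t ^ n / (Nat.factorial (k+n)) by ring]
    gcongr
  refine hstep.trans ?_
  rw [tsum_mul_left]
  have htail : ∑' k : ℕ, a ^ (k + n) / (Nat.factorial (k + n)) ≤ Real.exp a := by
    have hnn : 0 ≤ ∑ k ∈ Finset.range n, a ^ k / (Nat.factorial k) :=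
      Finset.sum_nonneg fun k _ => by positivity
    linarith
  exact mul_le_mul_of_nonneg_left htail (pow_nonneg ht0 n)

theorem aux {N : Type*} [MeasurableSpace N] (ν : Measure N) (p α : ℝ)
    (hp : 1 < p) (hα : 0 < α) (u : N → ℝ)
    (hu : Measurable u) :
    (∫⁻ x in {x | 1 ≤ |u x|}, ENNReal.ofReal (exp (α * |u x| ^ (p / (p - 1)))) ∂ν)
        - ENNReal.ofReal (exp α) * ∫⁻ x, ENNReal.ofReal (|u x| ^ p) ∂ν
      ≤ ∫⁻ x, ENNReal.ofReal
          (exp (α * |u x| ^ (p / (p - 1))) -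
            ∑ k ∈ Finset.range (⌈p - 2⌉₊ + 1),
              α ^ k * |u x| ^ ((k : ℝ) * (p / (p - 1))) / (Nat.factorial k)) ∂ν ∧
    (∫⁻ x, ENNReal.ofReal
          (exp (α * |u x| ^ (p / (p - 1))) -
            ∑ k ∈ Finset.range (⌈p - 2⌉₊ + 1),
              α ^ k * |u x| ^ ((k : ℝ) * (p / (p - 1))) / (Nat.factorial k)) ∂ν)
      ≤ (∫⁻ x in {x | 1 ≤ |u x|}, ENNReal.ofReal (exp (α * |u x| ^ (p / (p - 1)))) ∂ν)
        + ENNReal.ofReal (exp α) * ∫⁻ x, ENNReal.ofReal (|u x| ^ p) ∂ν := by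
  have hp1 : (0:ℝ) < p - 1 := by linarith
  set p' : ℝ := p / (p - 1) with hp'def
  set M : ℕ := ⌈p - 2⌉₊ with hMdef
  have hp'pos : 0 < p' := div_pos (by linarith) hp1
  have hpe : (p - 1) * p' = p := by
    rw [mul_comm]
    exact div_mul_cancel₀ p hp1.ne'
  have hM : (M : ℝ) ≤ p - 1 := by
    rcases le_or_gt (p - 2) 0 with h | h
    · rw [hMdef, Nat.ceil_eq_zero.mpr h]
      exact_mod_cast hp1.le
    · have := Nat.ceil_lt_add_one h.le
      rw [hMdef]
      linarith
  have hMp : (M : ℝ) * p' ≤ p := by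
    calc (M : ℝ) * p' ≤ (p - 1) * p' := mul_le_mul_of_nonneg_right hM hp'pos.le
      _ = p := hpe
  have hMp1 : p ≤ ((M : ℝ) + 1) * p' := by
    have h1 : p - 2 ≤ (M : ℝ) := Nat.le_ceil _
    calc p = (p - 1) * p' := hpe.symm
      _ ≤ ((M : ℝ) + 1) * p' := mul_le_mul_of_nonneg_right (by linarith) hp'pos.le
  -- sum rewriting
  have hsum_eq : ∀ x : N,
      ∑ k ∈ Finset.range (M + 1), α ^ k * |u x| ^ ((k : ℝ) * p') / (Nat.factorial k)
        = ∑ k ∈ Finset.range (M + 1), (α * |u x| ^ p') ^ k / (Nat.factorial k) := by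
    intro x
    refine Finset.sum_congr rfl fun k _ => ?_
    rw [mul_pow, mul_comm (k : ℝ) p', Real.rpow_mul (abs_nonneg _), Real.rpow_natCast]
  have hS_nonneg : ∀ x : N,
      0 ≤ ∑ k ∈ Finset.range (M + 1), α ^ k * |u x| ^ ((k : ℝ) * p') / (Nat.factorial k) :=
    fun x => Finset.sum_nonneg fun k _ => by positivity
  have hfe : ∀ x : N,
      ∑ k ∈ Finset.range (M + 1), α ^ k * |u x| ^ ((k : ℝ) * p') / (Nat.factorial k)
        ≤ exp (α * |u x| ^ p') := by
    intro x
    rw [hsum_eq x]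
    exact Real.sum_le_exp_of_nonneg (by positivity) _
  have hA_bound : ∀ x : N, 1 ≤ |u x| →
      ∑ k ∈ Finset.range (M + 1), α ^ k * |u x| ^ ((k : ℝ) * p') / (Nat.factorial k)
        ≤ exp α * |u x| ^ p := by
    intro x hx
    calc ∑ k ∈ Finset.range (M + 1), α ^ k * |u x| ^ ((k : ℝ) * p') / (Nat.factorial k)
        ≤ ∑ k ∈ Finset.range (M + 1), α ^ k * |u x| ^ p / (Nat.factorial k) := by
          refine Finset.sum_le_sum fun k hk => ?_
          have hkM : (k : ℝ) ≤ (M : ℝ) := by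
            exact_mod_cast Nat.lt_succ_iff.mp (Finset.mem_range.mp hk)
          have hkp : (k : ℝ) * p' ≤ p :=
            le_trans (mul_le_mul_of_nonneg_right hkM hp'pos.le) hMp
          have hr : |u x| ^ ((k : ℝ) * p') ≤ |u x| ^ p :=
            Real.rpow_le_rpow_of_exponent_le hx hkp
          gcongr
      _ = (∑ k ∈ Finset.range (M + 1), α ^ k / (Nat.factorial k)) * |u x| ^ p := by
          rw [Finset.sum_mul]
          exact Finset.sum_congr rfl fun k _ => by ring
      _ ≤ exp α * |u x| ^ p :=
          mul_le_mul_of_nonneg_right (Real.sum_le_exp_of_nonneg hα.le _)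
            (Real.rpow_nonneg (abs_nonneg _) p)
  have hAc_bound : ∀ x : N, |u x| ≤ 1 →
      exp (α * |u x| ^ p') -
        ∑ k ∈ Finset.range (M + 1), α ^ k * |u x| ^ ((k : ℝ) * p') / (Nat.factorial k)
        ≤ exp α * |u x| ^ p := by
    intro x hx
    rw [hsum_eq x]
    have ht0 : (0:ℝ) ≤ |u x| ^ p' := Real.rpow_nonneg (abs_nonneg _) _
    have ht1 : |u x| ^ p' ≤ 1 := Real.rpow_le_one (abs_nonneg _) hx hp'pos.le
    refine (tail_bound hα.le ht0 ht1 (M + 1)).trans ?_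
    rw [mul_comm (exp α)]
    refine mul_le_mul_of_nonneg_right ?_ (Real.exp_pos α).le
    rw [← Real.rpow_natCast (|u x| ^ p') (M + 1), ← Real.rpow_mul (abs_nonneg _)]
    rcases eq_or_lt_of_le (abs_nonneg (u x)) with h0 | h0
    · rw [← h0, Real.zero_rpow, Real.zero_rpow (by linarith : p ≠ 0)]
      positivity
    · refine Real.rpow_le_rpow_of_exponent_ge h0 hx ?_
      push_cast
      rw [mul_comm]
      exact hMp1
  -- measurability
  have hE : Measurable fun x => ENNReal.ofReal (exp (α * |u x| ^ p')) := by fun_prop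
  have hS : Measurable fun x =>
      (∑ k ∈ Finset.range (M + 1), α ^ k * |u x| ^ ((k : ℝ) * p') / (Nat.factorial k) : ℝ) := by
    apply Finset.measurable_sum
    intro k _
    fun_prop
  have hF : Measurable fun x => ENNReal.ofReal
      (exp (α * |u x| ^ p') -
        ∑ k ∈ Finset.range (M + 1), α ^ k * |u x| ^ ((k : ℝ) * p') / (Nat.factorial k)) := by
    apply ENNReal.measurable_ofReal.comp
    exact Measurable.sub (by fun_prop) hS
  have hP : Measurable fun x => ENNReal.ofReal (|u x| ^ p) := by fun_prop
  have hEP : Measurable fun x => ENNReal.ofReal (exp α * |u x| ^ p) := by fun_prop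
  have hA : MeasurableSet {x | 1 ≤ |u x|} := measurableSet_le measurable_const hu.abs
  have hsplit : ∀ x : N, ENNReal.ofReal (exp (α * |u x| ^ p'))
      = ENNReal.ofReal (exp (α * |u x| ^ p') -
          ∑ k ∈ Finset.range (M + 1), α ^ k * |u x| ^ ((k : ℝ) * p') / (Nat.factorial k))
        + ENNReal.ofReal
          (∑ k ∈ Finset.range (M + 1), α ^ k * |u x| ^ ((k : ℝ) * p') / (Nat.factorial k)) := by
    intro x
    rw [← ENNReal.ofReal_add (sub_nonneg.mpr (hfe x)) (hS_nonneg x), sub_add_cancel]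
  have hofmul : ∀ x : N, ENNReal.ofReal (exp α * |u x| ^ p)
      = ENNReal.ofReal (exp α) * ENNReal.ofReal (|u x| ^ p) := fun x =>
    ENNReal.ofReal_mul (Real.exp_pos α).le
  constructor
  · rw [tsub_le_iff_right]
    calc ∫⁻ x in {x | 1 ≤ |u x|}, ENNReal.ofReal (exp (α * |u x| ^ p')) ∂ν
        = (∫⁻ x in {x | 1 ≤ |u x|}, ENNReal.ofReal
              (exp (α * |u x| ^ p') -
                ∑ k ∈ Finset.range (M + 1), α ^ k * |u x| ^ ((k : ℝ) * p') / (Nat.factorial k)) ∂ν)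
          + ∫⁻ x in {x | 1 ≤ |u x|}, ENNReal.ofReal
              (∑ k ∈ Finset.range (M + 1), α ^ k * |u x| ^ ((k : ℝ) * p') / (Nat.factorial k)) ∂ν := by
          rw [← lintegral_add_left hF]
          exact lintegral_congr fun x => hsplit x
      _ ≤ (∫⁻ x, ENNReal.ofReal
              (exp (α * |u x| ^ p') -
                ∑ k ∈ Finset.range (M + 1), α ^ k * |u x| ^ ((k : ℝ) * p') / (Nat.factorial k)) ∂ν)
          + ENNReal.ofReal (exp α) * ∫⁻ x, ENNReal.ofReal (|u x| ^ p) ∂ν := by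
          refine add_le_add (setLIntegral_le_lintegral _ _) ?_
          calc ∫⁻ x in {x | 1 ≤ |u x|}, ENNReal.ofReal
                (∑ k ∈ Finset.range (M + 1), α ^ k * |u x| ^ ((k : ℝ) * p') / (Nat.factorial k)) ∂ν
              ≤ ∫⁻ x in {x | 1 ≤ |u x|}, ENNReal.ofReal (exp α * |u x| ^ p) ∂ν :=
                setLIntegral_mono hEP fun x hx => ENNReal.ofReal_le_ofReal (hA_bound x hx)
            _ = ENNReal.ofReal (exp α) * ∫⁻ x in {x | 1 ≤ |u x|}, ENNReal.ofReal (|u x| ^ p) ∂ν := by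
                simp_rw [hofmul]
                exact lintegral_const_mul _ hP
            _ ≤ ENNReal.ofReal (exp α) * ∫⁻ x, ENNReal.ofReal (|u x| ^ p) ∂ν :=
                mul_le_mul_right (setLIntegral_le_lintegral _ _) _
  · rw [← lintegral_add_compl (fun x => ENNReal.ofReal
      (exp (α * |u x| ^ p') -
        ∑ k ∈ Finset.range (M + 1), α ^ k * |u x| ^ ((k : ℝ) * p') / (Nat.factorial k))) hA]
    refine add_le_add ?_ ?_
    · exact setLIntegral_mono hE fun x _ =>
        ENNReal.ofReal_le_ofReal (sub_le_self _ (hS_nonneg x))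
    · calc ∫⁻ x in {x | 1 ≤ |u x|}ᶜ, ENNReal.ofReal
            (exp (α * |u x| ^ p') -
              ∑ k ∈ Finset.range (M + 1), α ^ k * |u x| ^ ((k : ℝ) * p') / (Nat.factorial k)) ∂ν
          ≤ ∫⁻ x in {x | 1 ≤ |u x|}ᶜ, ENNReal.ofReal (exp α * |u x| ^ p) ∂ν := by
            refine setLIntegral_mono hEP fun x hx => ?_
            have hx1 : |u x| ≤ 1 := (not_le.mp (by simpa using hx)).le
            exact ENNReal.ofReal_le_ofReal (hAc_bound x hx1)
        _ = ENNReal.ofReal (exp α) * ∫⁻ x in {x | 1 ≤ |u x|}ᶜ, ENNReal.ofReal (|u x| ^ p) ∂ν := by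
            simp_rw [hofmul]
            exact lintegral_const_mul _ hP
        _ ≤ ENNReal.ofReal (exp α) * ∫⁻ x, ENNReal.ofReal (|u x| ^ p) ∂ν :=
            mul_le_mul_right (setLIntegral_le_lintegral _ _) _

/-- Exponential Regularization Lemma (Lemma 9 of Fontana–Morpurgo). -/
theorem stmt2 {N : Type*} [MeasurableSpace N] (ν : Measure N) (p α : ℝ)
    (hp : 1 < p) (hα : 0 < α) (u : N → ℝ)
    (hu : MemLp u (ENNReal.ofReal p) ν) :
    (∫⁻ x in {x | 1 ≤ |u x|}, ENNReal.ofReal (exp (α * |u x| ^ (p / (p - 1)))) ∂ν)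
        - ENNReal.ofReal (exp α) * ∫⁻ x, ENNReal.ofReal (|u x| ^ p) ∂ν
      ≤ ∫⁻ x, ENNReal.ofReal
          (exp (α * |u x| ^ (p / (p - 1))) -
            ∑ k ∈ Finset.range (⌈p - 2⌉₊ + 1),
              α ^ k * |u x| ^ ((k : ℝ) * (p / (p - 1))) / (Nat.factorial k)) ∂ν ∧
    (∫⁻ x, ENNReal.ofReal
          (exp (α * |u x| ^ (p / (p - 1))) -
            ∑ k ∈ Finset.range (⌈p - 2⌉₊ + 1),
              α ^ k * |u x| ^ ((k : ℝ) * (p / (p - 1))) / (Nat.factorial k)) ∂ν)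
      ≤ (∫⁻ x in {x | 1 ≤ |u x|}, ENNReal.ofReal (exp (α * |u x| ^ (p / (p - 1)))) ∂ν)
        + ENNReal.ofReal (exp α) * ∫⁻ x, ENNReal.ofReal (|u x| ^ p) ∂ν := by
  have hmeas : AEMeasurable u ν := hu.aestronglyMeasurable.aemeasurable
  set v : N → ℝ := hmeas.mk u with hvdef
  have hv : Measurable v := hmeas.measurable_mk
  have huv : u =ᵐ[ν] v := hmeas.ae_eq_mk
  have h1 : (∫⁻ x, ENNReal.ofReal (|u x| ^ p) ∂ν) = ∫⁻ x, ENNReal.ofReal (|v x| ^ p) ∂ν :=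
    lintegral_congr_ae (huv.mono fun x hx => by dsimp only; rw [hx])
  have h2 : (∫⁻ x, ENNReal.ofReal
          (exp (α * |u x| ^ (p / (p - 1))) -
            ∑ k ∈ Finset.range (⌈p - 2⌉₊ + 1),
              α ^ k * |u x| ^ ((k : ℝ) * (p / (p - 1))) / (Nat.factorial k)) ∂ν)
      = ∫⁻ x, ENNReal.ofReal
          (exp (α * |v x| ^ (p / (p - 1))) -
            ∑ k ∈ Finset.range (⌈p - 2⌉₊ + 1),
              α ^ k * |v x| ^ ((k : ℝ) * (p / (p - 1))) / (Nat.factorial k)) ∂ν :=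
    lintegral_congr_ae (huv.mono fun x hx => by dsimp only; rw [hx])
  have hset : {x | 1 ≤ |u x|} =ᵐ[ν] {x | 1 ≤ |v x|} :=
    Filter.eventuallyEq_set.mpr (huv.mono fun x hx => by simp [Set.mem_setOf_eq, hx])
  have h3 : (∫⁻ x in {x | 1 ≤ |u x|}, ENNReal.ofReal (exp (α * |u x| ^ (p / (p - 1)))) ∂ν)
      = ∫⁻ x in {x | 1 ≤ |v x|}, ENNReal.ofReal (exp (α * |v x| ^ (p / (p - 1)))) ∂ν := by
    rw [Measure.restrict_congr_set hset]
    exact lintegral_congr_ae (ae_restrict_of_ae (huv.mono fun x hx => by dsimp only; rw [hx]))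
  rw [h1, h2, h3]
  exact aux ν p α hp hα v hv
end

section
/- Let g : ℝⁿ \ {0} → ℝ be homogeneous of degree α−n (i.e. g(x) = g(x/|x|)·|x|^{α−n}) with 0 < α < n, and suppose g restricted to the unit sphere is Lipschitz with respect to Euclidean distance. Then there exists L > 0 depending only on g, α, n such that for all x₁, x₂, y with y ≠ x₁, y ≠ x₂: |g(x₁−y) − g(x₂−y)| ≤ L·|x₁−x₂|·(min(|x₁−y|, |x₂−y|))^{α−n−1}. -/
open Real
set_option maxHeartbeats 1000000

/-- Estimate (22ab) from Lemma 11 of Fontana–Morpurgo: Lipschitz-type estimate for a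
kernel homogeneous of degree `α - n` which is Lipschitz on the unit sphere. -/
theorem stmt4 (n : ℕ) (α : ℝ) (hα : 0 < α) (hαn : α < n)
    (g : EuclideanSpace ℝ (Fin n) → ℝ)
    (hg_hom : ∀ x : EuclideanSpace ℝ (Fin n), x ≠ 0 →
      g x = g (‖x‖⁻¹ • x) * ‖x‖ ^ (α - n))
    (hg_lip : ∃ M : ℝ, ∀ u v : EuclideanSpace ℝ (Fin n),
      ‖u‖ = 1 → ‖v‖ = 1 → |g u - g v| ≤ M * ‖u - v‖) :
    ∃ L > 0, ∀ x₁ x₂ y : EuclideanSpace ℝ (Fin n), y ≠ x₁ → y ≠ x₂ →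
      |g (x₁ - y) - g (x₂ - y)|
        ≤ L * ‖x₁ - x₂‖ * (min ‖x₁ - y‖ ‖x₂ - y‖) ^ (α - n - 1) := by
  obtain ⟨M₀, hM₀⟩ := hg_lip
  set M : ℝ := max M₀ 0 with hMdef
  have hMnn : 0 ≤ M := le_max_right _ _
  have hlip : ∀ u v : EuclideanSpace ℝ (Fin n), ‖u‖ = 1 → ‖v‖ = 1 →
      |g u - g v| ≤ M * ‖u - v‖ := by
    intro u v hu hv
    refine (hM₀ u v hu hv).trans ?_
    have := norm_nonneg (u - v)
    nlinarith [le_max_left M₀ (0:ℝ)]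
  have hn : 0 < n := by
    have : (0:ℝ) < n := hα.trans hαn
    exact_mod_cast this
  set e : EuclideanSpace ℝ (Fin n) := EuclideanSpace.single (⟨0, hn⟩ : Fin n) (1:ℝ) with he
  have he1 : ‖e‖ = 1 := by simp [he, EuclideanSpace.norm_single]
  set C : ℝ := |g e| + 2 * M with hCdef
  have hCnn : 0 ≤ C := by positivity
  have hbound : ∀ u : EuclideanSpace ℝ (Fin n), ‖u‖ = 1 → |g u| ≤ C := by
    intro u hu
    have h1 : |g u - g e| ≤ M * ‖u - e‖ := hlip u e hu he1
    have h2 : ‖u - e‖ ≤ 2 := by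
      calc ‖u - e‖ ≤ ‖u‖ + ‖e‖ := norm_sub_le _ _
        _ = 2 := by rw [hu, he1]; norm_num
    have h3 : |g u| ≤ |g u - g e| + |g e| := by
      calc |g u| = |(g u - g e) + g e| := by ring_nf
        _ ≤ |g u - g e| + |g e| := abs_add_le _ _
    nlinarith
  set L : ℝ := 2 * M + C * (n - α) + 1 with hLdef
  have hnα : (0:ℝ) < n - α := by linarith
  have hL : 0 < L := by positivity
  have key : ∀ a b : EuclideanSpace ℝ (Fin n), a ≠ 0 → b ≠ 0 → ‖a‖ ≤ ‖b‖ →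
      |g a - g b| ≤ L * ‖a - b‖ * ‖a‖ ^ (α - n - 1) := by
    intro a b ha hb hab
    have hra : 0 < ‖a‖ := norm_pos_iff.mpr ha
    have hrb : 0 < ‖b‖ := norm_pos_iff.mpr hb
    set ra := ‖a‖ with hradef
    set rb := ‖b‖ with hrbdef
    set c : ℝ := α - n with hc
    have hcneg : c < 0 := by rw [hc]; linarith
    set ua : EuclideanSpace ℝ (Fin n) := ra⁻¹ • a with hua
    set ub : EuclideanSpace ℝ (Fin n) := rb⁻¹ • b with hub
    have hua1 : ‖ua‖ = 1 := norm_smul_inv_norm (𝕜 := ℝ) ha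
    have hub1 : ‖ub‖ = 1 := norm_smul_inv_norm (𝕜 := ℝ) hb
    have hdd : rb - ra ≤ ‖a - b‖ := by
      have := norm_sub_norm_le b a
      rw [norm_sub_rev] at this
      linarith
    -- step 1
    have step1 : ‖ua - ub‖ ≤ 2 * ‖a - b‖ / rb := by
      have hdecomp : ua - ub = rb⁻¹ • (a - b) + (ra⁻¹ - rb⁻¹) • a := by
        rw [hua, hub, smul_sub, sub_smul]
        abel
      have hinv : rb⁻¹ ≤ ra⁻¹ := inv_anti₀ hra hab
      have h1 : ‖ua - ub‖ ≤ rb⁻¹ * ‖a - b‖ + (ra⁻¹ - rb⁻¹) * ra := by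
        rw [hdecomp]
        refine (norm_add_le _ _).trans ?_
        rw [norm_smul, norm_smul, Real.norm_eq_abs, Real.norm_eq_abs,
          abs_of_pos (inv_pos.mpr hrb), abs_of_nonneg (by linarith : (0:ℝ) ≤ ra⁻¹ - rb⁻¹)]
      have h3 : (ra⁻¹ - rb⁻¹) * ra = (rb - ra) / rb := by
        field_simp
      rw [h3] at h1
      have h4 : (rb - ra) / rb ≤ ‖a - b‖ / rb := by
        gcongr
      calc ‖ua - ub‖ ≤ rb⁻¹ * ‖a - b‖ + (rb - ra) / rb := h1
        _ ≤ rb⁻¹ * ‖a - b‖ + ‖a - b‖ / rb := by linarith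
        _ = 2 * ‖a - b‖ / rb := by field_simp; ring
    -- step 2 : MVT
    have step2 : |ra ^ c - rb ^ c| ≤ (n - α) * ra ^ (c - 1) * ‖a - b‖ := by
      have hmono : rb ^ c ≤ ra ^ c := Real.rpow_le_rpow_of_nonpos hra hab hcneg.le
      rw [abs_of_nonneg (by linarith)]
      rcases eq_or_lt_of_le hab with heq | hlt
      · rw [heq]
        simp
        positivity
      · have hcont : ContinuousOn (fun t : ℝ => t ^ c) (Set.Icc ra rb) := by
          intro x hx
          exact (Real.continuousAt_rpow_const x c (Or.inl (by
            have := hx.1; intro h; rw [h] at this; linarith))).continuousWithinAt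
        have hderiv : ∀ x ∈ Set.Ioo ra rb,
            HasDerivAt (fun t : ℝ => t ^ c) (c * x ^ (c - 1)) x := by
          intro x hx
          exact Real.hasDerivAt_rpow_const (Or.inl (by
            have := hx.1; intro h; rw [h] at this; linarith))
        obtain ⟨ξ, hξ, hξeq⟩ := exists_hasDerivAt_eq_slope (fun t : ℝ => t ^ c)
          (fun x => c * x ^ (c - 1)) hlt hcont hderiv
        have hξpos : 0 < ξ := hra.trans hξ.1
        have hξra : ra ≤ ξ := hξ.1.le
        have hξle : ξ ^ (c - 1) ≤ ra ^ (c - 1) :=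
          Real.rpow_le_rpow_of_nonpos hra hξra (by linarith)
        have heq2 : ra ^ c - rb ^ c = (↑n - α) * ξ ^ (c - 1) * (rb - ra) := by
          have hne : rb - ra ≠ 0 := by linarith
          have h6 : rb ^ c - ra ^ c = c * ξ ^ (c - 1) * (rb - ra) := by
            rw [hξeq]; field_simp
          have hcn : (↑n : ℝ) - α = -c := by rw [hc]; ring
          rw [hcn]
          linear_combination -h6
        rw [heq2]
        have hxpow : 0 < ξ ^ (c - 1) := Real.rpow_pos_of_pos hξpos _
        have hrapow : 0 < ra ^ (c - 1) := Real.rpow_pos_of_pos hra _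
        calc (↑n - α) * ξ ^ (c - 1) * (rb - ra)
            ≤ (↑n - α) * ra ^ (c - 1) * (rb - ra) :=
              mul_le_mul_of_nonneg_right (mul_le_mul_of_nonneg_left hξle hnα.le)
                (by linarith)
          _ ≤ (↑n - α) * ra ^ (c - 1) * ‖a - b‖ :=
              mul_le_mul_of_nonneg_left hdd (by positivity)
    -- assemble
    have hga : g a = g ua * ra ^ c := hg_hom a ha
    have hgb : g b = g ub * rb ^ c := hg_hom b hb
    have hrapos : 0 < ra ^ c := Real.rpow_pos_of_pos hra _
    have hrc1 : ra ^ c / rb ≤ ra ^ (c - 1) := by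
      have hre : ra ^ (c - 1) = ra ^ c / ra := by
        rw [Real.rpow_sub hra, Real.rpow_one]
      rw [hre]
      gcongr
    have hsplit : g a - g b = (g ua - g ub) * ra ^ c + g ub * (ra ^ c - rb ^ c) := by
      rw [hga, hgb]; ring
    have h1 : |g a - g b| ≤ |g ua - g ub| * ra ^ c + |g ub| * |ra ^ c - rb ^ c| := by
      rw [hsplit]
      refine (abs_add_le _ _).trans ?_
      rw [abs_mul, abs_mul, abs_of_pos hrapos]
    have h2 : |g ua - g ub| * ra ^ c ≤ M * (2 * ‖a - b‖ / rb) * ra ^ c := by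
      have := hlip ua ub hua1 hub1
      have h5 : |g ua - g ub| ≤ M * (2 * ‖a - b‖ / rb) := by
        refine this.trans ?_
        apply mul_le_mul_of_nonneg_left step1 hMnn
      nlinarith
    have h3 : |g ub| * |ra ^ c - rb ^ c| ≤ C * ((n - α) * ra ^ (c - 1) * ‖a - b‖) := by
      apply mul_le_mul (hbound ub hub1) step2 (abs_nonneg _) hCnn
    have h4 : M * (2 * ‖a - b‖ / rb) * ra ^ c ≤ 2 * M * ‖a - b‖ * ra ^ (c - 1) := by
      have : M * (2 * ‖a - b‖ / rb) * ra ^ c = 2 * M * ‖a - b‖ * (ra ^ c / rb) := by ring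
      rw [this]
      have hmn : 0 ≤ 2 * M * ‖a - b‖ := by positivity
      exact mul_le_mul_of_nonneg_left hrc1 hmn
    have hfin : α - n - 1 = c - 1 := by rw [hc]
    rw [hfin]
    have hrapow : 0 < ra ^ (c - 1) := Real.rpow_pos_of_pos hra _
    calc |g a - g b| ≤ |g ua - g ub| * ra ^ c + |g ub| * |ra ^ c - rb ^ c| := h1
      _ ≤ 2 * M * ‖a - b‖ * ra ^ (c - 1) + C * ((n - α) * ra ^ (c - 1) * ‖a - b‖) := by
          have := h2.trans h4
          linarith
      _ = (2 * M + C * (n - α)) * ‖a - b‖ * ra ^ (c - 1) := by ring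
      _ ≤ L * ‖a - b‖ * ra ^ (c - 1) := by
          rw [hLdef]
          have := norm_nonneg (a - b)
          nlinarith
  refine ⟨L, hL, ?_⟩
  intro x₁ x₂ y hy1 hy2
  have ha : x₁ - y ≠ 0 := sub_ne_zero.mpr (fun h => hy1 h.symm)
  have hb : x₂ - y ≠ 0 := sub_ne_zero.mpr (fun h => hy2 h.symm)
  have hxx : x₁ - x₂ = (x₁ - y) - (x₂ - y) := by abel
  rcases le_total ‖x₁ - y‖ ‖x₂ - y‖ with h | h
  · rw [min_eq_left h, hxx]
    exact key _ _ ha hb h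
  · rw [min_eq_right h, hxx]
    have := key _ _ hb ha h
    rw [abs_sub_comm, norm_sub_rev] at this
    exact this
end

section
/- Let 0 < α < n, let g : ℝⁿ\{0} → ℝ be homogeneous of degree α−n with g Lipschitz on the unit sphere, let f ∈ L^{n/α}(ℝⁿ) with supp f compact, |supp f| ≤ 1, and let F ⊆ ℝⁿ be closed with dist(F, supp f) ≥ R ≥ 1. Then T_g f(x) = ∫ g(x−y)f(y)dy is Lipschitz on F: there is D = D(n,α,g) with |T_g f(x₁) − T_g f(x₂)| ≤ (D/R)·‖f‖_{n/α}·|x₁−x₂| for all x₁, x₂ ∈ F. -/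
open Real MeasureTheory ENNReal

/-- The convolution potential `T_g f (x) = ∫ g(x-y) f(y) dy`. -/
noncomputable def Tg {n : ℕ} (g f : EuclideanSpace ℝ (Fin n) → ℝ)
    (x : EuclideanSpace ℝ (Fin n)) : ℝ :=
  ∫ y, g (x - y) * f y

lemma aux_one_sub_rpow {x q : ℝ} (hx0 : 0 < x) (hx1 : x ≤ 1) :
    1 - x ^ q ≤ max q 1 * (1 - x) := by
  rcases le_total q 1 with h | h
  · have hxq : x ^ (1:ℝ) ≤ x ^ q := Real.rpow_le_rpow_of_exponent_ge hx0 hx1 h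
    rw [Real.rpow_one] at hxq
    have : (1:ℝ) ≤ max q 1 := le_max_right _ _
    nlinarith [sub_nonneg.2 hx1]
  · have hb := one_add_mul_self_le_rpow_one_add (s := x - 1) (by linarith) h
    have hx : (1:ℝ) + (x - 1) = x := by ring
    rw [hx] at hb
    have : max q 1 = q := max_eq_left h
    nlinarith

lemma aux_kernel {E : Type*} [NormedAddCommGroup E] [NormedSpace ℝ E] {α nr : ℝ}
    (hαn : α < nr)
    (g : E → ℝ)
    (hg_hom : ∀ x : E, x ≠ 0 → g x = g (‖x‖⁻¹ • x) * ‖x‖ ^ (α - nr))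
    {M K : ℝ} (hM : 0 ≤ M)
    (hlip : ∀ u v : E, ‖u‖ = 1 → ‖v‖ = 1 → |g u - g v| ≤ M * ‖u - v‖)
    (hK : ∀ u : E, ‖u‖ = 1 → |g u| ≤ K)
    {R : ℝ} (hR : 1 ≤ R) {a b : E}
    (ha : R ≤ ‖a‖) (hb : R ≤ ‖b‖) (hab : ‖a‖ ≤ ‖b‖) :
    |g a - g b| ≤ (2 * M + K * max (nr - α) 1) / R * ‖a - b‖ := by
  have hR0 : (0:ℝ) < R := lt_of_lt_of_le one_pos hR
  have hs0 : (0:ℝ) < ‖a‖ := lt_of_lt_of_le hR0 ha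
  have ht0 : (0:ℝ) < ‖b‖ := lt_of_lt_of_le hR0 hb
  have ha0 : a ≠ 0 := norm_pos_iff.mp hs0
  have hb0 : b ≠ 0 := norm_pos_iff.mp ht0
  have hd0 : (0:ℝ) ≤ ‖a - b‖ := norm_nonneg _
  set p := α - nr with hp
  have hpneg : p ≤ 0 := by simp only [hp]; linarith
  set ua := ‖a‖⁻¹ • a with hua'
  set ub := ‖b‖⁻¹ • b with hub'
  have hua : ‖ua‖ = 1 := norm_smul_inv_norm ha0
  have hub : ‖ub‖ = 1 := norm_smul_inv_norm hb0
  have hsp1 : ‖a‖ ^ p ≤ (1:ℝ) :=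
    Real.rpow_le_one_of_one_le_of_nonpos (le_trans hR ha) hpneg
  have hsp0 : (0:ℝ) ≤ ‖a‖ ^ p := Real.rpow_nonneg hs0.le p
  have htp_le : ‖b‖ ^ p ≤ ‖a‖ ^ p := Real.rpow_le_rpow_of_nonpos hs0 hab hpneg
  have hK0 : (0:ℝ) ≤ K := le_trans (abs_nonneg _) (hK ua hua)
  have hts : ‖b‖ - ‖a‖ ≤ ‖a - b‖ := by
    have h := abs_norm_sub_norm_le b a
    rw [norm_sub_rev] at h
    calc ‖b‖ - ‖a‖ ≤ |‖b‖ - ‖a‖| := le_abs_self _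
      _ ≤ ‖a - b‖ := h
  -- bound on unit vectors difference
  have hunit : ‖ua - ub‖ ≤ 2 * ‖a - b‖ / R := by
    have h1 : ua - ub = ‖a‖⁻¹ • (a - b) + (‖a‖⁻¹ - ‖b‖⁻¹) • b := by
      rw [hua', hub']; module
    have h2 : ‖ua - ub‖ ≤ ‖a‖⁻¹ * ‖a - b‖ + |‖a‖⁻¹ - ‖b‖⁻¹| * ‖b‖ := by
      rw [h1]
      refine (norm_add_le _ _).trans ?_
      rw [norm_smul, norm_smul, Real.norm_eq_abs, Real.norm_eq_abs,
        abs_of_nonneg (inv_nonneg.2 hs0.le)]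
    have h3 : |‖a‖⁻¹ - ‖b‖⁻¹| = ‖a‖⁻¹ - ‖b‖⁻¹ := by
      rw [abs_of_nonneg]
      exact sub_nonneg.2 (inv_anti₀ hs0 hab)
    have h4 : (‖a‖⁻¹ - ‖b‖⁻¹) * ‖b‖ = (‖b‖ - ‖a‖) / ‖a‖ := by
      field_simp
    have h5 : ‖a‖⁻¹ * ‖a - b‖ = ‖a - b‖ / ‖a‖ := by
      rw [inv_mul_eq_div]
    rw [h3, h4, h5] at h2
    refine h2.trans ?_
    have h6 : (‖b‖ - ‖a‖) / ‖a‖ ≤ ‖a - b‖ / ‖a‖ := by gcongr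
    have h7 : ‖a - b‖ / ‖a‖ ≤ ‖a - b‖ / R := by gcongr
    calc ‖a - b‖ / ‖a‖ + (‖b‖ - ‖a‖) / ‖a‖ ≤ ‖a - b‖ / R + ‖a - b‖ / R := by
          refine add_le_add h7 (h6.trans h7)
      _ = 2 * ‖a - b‖ / R := by ring
  -- bound on the power difference
  have hpow : ‖a‖ ^ p - ‖b‖ ^ p ≤ max (nr - α) 1 * ‖a - b‖ / R := by
    have hx0 : (0:ℝ) < ‖a‖ / ‖b‖ := div_pos hs0 ht0
    have hx1 : ‖a‖ / ‖b‖ ≤ 1 := (div_le_one ht0).2 hab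
    have hfrac : ‖b‖ ^ p = ‖a‖ ^ p * (‖a‖ / ‖b‖) ^ (nr - α) := by
      rw [Real.div_rpow hs0.le ht0.le, mul_div_assoc', ← Real.rpow_add hs0]
      have hpq : p + (nr - α) = 0 := by simp [hp]
      rw [hpq, Real.rpow_zero, one_div, ← Real.rpow_neg ht0.le]
      congr 1
      simp [hp]
    have haux := aux_one_sub_rpow (q := nr - α) hx0 hx1
    have h1x : 1 - ‖a‖ / ‖b‖ = (‖b‖ - ‖a‖) / ‖b‖ := by field_simp
    have hone : (0:ℝ) ≤ 1 - (‖a‖ / ‖b‖) ^ (nr - α) := by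
      have : (‖a‖ / ‖b‖) ^ (nr - α) ≤ 1 :=
        Real.rpow_le_one hx0.le hx1 (by linarith)
      linarith
    have step1 : ‖a‖ ^ p - ‖b‖ ^ p = ‖a‖ ^ p * (1 - (‖a‖ / ‖b‖) ^ (nr - α)) := by
      rw [hfrac]; ring
    have step2 : ‖a‖ ^ p * (1 - (‖a‖ / ‖b‖) ^ (nr - α)) ≤ 1 - (‖a‖ / ‖b‖) ^ (nr - α) := by
      nlinarith
    have hmax0 : (0:ℝ) ≤ max (nr - α) 1 := le_trans zero_le_one (le_max_right _ _)
    have step3 : max (nr - α) 1 * ((‖b‖ - ‖a‖) / ‖b‖) ≤ max (nr - α) 1 * (‖a - b‖ / R) := by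
      have hbb : (‖b‖ - ‖a‖) / ‖b‖ ≤ ‖a - b‖ / R := by
        rw [div_le_div_iff₀ ht0 hR0]
        nlinarith
      exact mul_le_mul_of_nonneg_left hbb hmax0
    calc ‖a‖ ^ p - ‖b‖ ^ p = ‖a‖ ^ p * (1 - (‖a‖ / ‖b‖) ^ (nr - α)) := step1
      _ ≤ 1 - (‖a‖ / ‖b‖) ^ (nr - α) := step2
      _ ≤ max (nr - α) 1 * (1 - ‖a‖ / ‖b‖) := haux
      _ = max (nr - α) 1 * ((‖b‖ - ‖a‖) / ‖b‖) := by rw [h1x]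
      _ ≤ max (nr - α) 1 * (‖a - b‖ / R) := step3
      _ = max (nr - α) 1 * ‖a - b‖ / R := by ring
  -- assemble
  have h3 : |g ua - g ub| ≤ M * (2 * ‖a - b‖ / R) :=
    (hlip ua ub hua hub).trans (mul_le_mul_of_nonneg_left hunit hM)
  have h5 : |g ub| ≤ K := hK ub hub
  rw [hg_hom a ha0, hg_hom b hb0, ← hua', ← hub']
  have key : g ua * ‖a‖ ^ p - g ub * ‖b‖ ^ p
      = (g ua - g ub) * ‖a‖ ^ p + g ub * (‖a‖ ^ p - ‖b‖ ^ p) := by ring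
  rw [key]
  calc |(g ua - g ub) * ‖a‖ ^ p + g ub * (‖a‖ ^ p - ‖b‖ ^ p)|
      ≤ |g ua - g ub| * ‖a‖ ^ p + |g ub| * (‖a‖ ^ p - ‖b‖ ^ p) := by
        refine (abs_add_le _ _).trans ?_
        rw [abs_mul, abs_mul, abs_of_nonneg hsp0, abs_of_nonneg (sub_nonneg.2 htp_le)]
    _ ≤ (M * (2 * ‖a - b‖ / R)) * 1 + K * (max (nr - α) 1 * ‖a - b‖ / R) := by
        refine add_le_add (mul_le_mul h3 hsp1 hsp0 (by positivity)) ?_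
        exact mul_le_mul h5 hpow (sub_nonneg.2 htp_le) hK0
    _ = (2 * M + K * max (nr - α) 1) / R * ‖a - b‖ := by field_simp

/-- Lemma 11, case (i): `T_g f` is Lipschitz on a closed set far from the support of `f`. -/
theorem stmt5 (n : ℕ) (α : ℝ) (hα : 0 < α) (hαn : α < n)
    (g : EuclideanSpace ℝ (Fin n) → ℝ)
    (hg_hom : ∀ x : EuclideanSpace ℝ (Fin n), x ≠ 0 →
      g x = g (‖x‖⁻¹ • x) * ‖x‖ ^ (α - n))
    (hg_lip : ∃ M : ℝ, ∀ u v : EuclideanSpace ℝ (Fin n),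
      ‖u‖ = 1 → ‖v‖ = 1 → |g u - g v| ≤ M * ‖u - v‖) :
    ∃ D > 0, ∀ (f : EuclideanSpace ℝ (Fin n) → ℝ) (F : Set (EuclideanSpace ℝ (Fin n)))
      (R : ℝ), 1 ≤ R →
      MemLp f (ENNReal.ofReal (n / α)) volume →
      HasCompactSupport f →
      volume (Function.support f) ≤ 1 →
      IsClosed F →
      (∀ x ∈ F, ∀ y ∈ tsupport f, R ≤ dist x y) →
      ∀ x₁ ∈ F, ∀ x₂ ∈ F,
        |Tg g f x₁ - Tg g f x₂|
          ≤ (D / R) * (eLpNorm f (ENNReal.ofReal (n / α)) volume).toReal * ‖x₁ - x₂‖ := by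
  obtain ⟨M₀, hM₀⟩ := hg_lip
  set M := |M₀| with hM'
  have hM : 0 ≤ M := abs_nonneg _
  have hlip : ∀ u v : EuclideanSpace ℝ (Fin n), ‖u‖ = 1 → ‖v‖ = 1 →
      |g u - g v| ≤ M * ‖u - v‖ := fun u v hu hv =>
    (hM₀ u v hu hv).trans (mul_le_mul_of_nonneg_right (le_abs_self M₀) (norm_nonneg _))
  have hnpos : (0:ℝ) < n := hα.trans hαn
  have hn : 0 < n := by exact_mod_cast hnpos
  have hne : Nonempty (Fin n) := ⟨⟨0, hn⟩⟩
  set u₀ : EuclideanSpace ℝ (Fin n) := EuclideanSpace.single ⟨0, hn⟩ 1 with hu₀'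
  have hu₀ : ‖u₀‖ = 1 := by simp [hu₀', EuclideanSpace.norm_single]
  set K := |g u₀| + 2 * M with hK'
  have hK : ∀ u : EuclideanSpace ℝ (Fin n), ‖u‖ = 1 → |g u| ≤ K := by
    intro u hu
    have h1 := hlip u u₀ hu hu₀
    have h2 : ‖u - u₀‖ ≤ 2 := by
      calc ‖u - u₀‖ ≤ ‖u‖ + ‖u₀‖ := norm_sub_le _ _
        _ = 2 := by rw [hu, hu₀]; norm_num
    have h3 : |g u - g u₀| ≤ M * 2 := h1.trans (mul_le_mul_of_nonneg_left h2 hM)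
    calc |g u| = |g u₀ + (g u - g u₀)| := by ring_nf
      _ ≤ |g u₀| + |g u - g u₀| := abs_add_le _ _
      _ ≤ K := by rw [hK']; linarith
  have hK0 : 0 ≤ K := le_trans (abs_nonneg _) (hK u₀ hu₀)
  set C := 2 * M + K * max ((n:ℝ) - α) 1 with hC'
  have hmax0 : (0:ℝ) ≤ max ((n:ℝ) - α) 1 := le_trans zero_le_one (le_max_right _ _)
  have hC0 : 0 ≤ C := by rw [hC']; nlinarith
  refine ⟨C + 1, by linarith, ?_⟩
  intro f F R hR hf hcomp hsupp hFc hdist x₁ hx₁ x₂ hx₂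
  have hR0 : (0:ℝ) < R := lt_of_lt_of_le one_pos hR
  -- Lipschitz extension of g from the unit sphere
  have hlipOn : LipschitzOnWith (Real.toNNReal M) g
      (Metric.sphere (0:EuclideanSpace ℝ (Fin n)) 1) := by
    apply LipschitzOnWith.of_dist_le_mul
    intro u hu v hv
    rw [mem_sphere_zero_iff_norm] at hu hv
    rw [Real.dist_eq, dist_eq_norm]
    simpa [Real.coe_toNNReal M hM] using hlip u v hu hv
  obtain ⟨g', hg'lip, hg'eq⟩ := hlipOn.extend_real
  set H : EuclideanSpace ℝ (Fin n) → ℝ :=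
    fun z => g' (‖z‖⁻¹ • z) * Real.exp ((α - n) * Real.log ‖z‖) with hH'
  have hHg : ∀ z : EuclideanSpace ℝ (Fin n), z ≠ 0 → H z = g z := by
    intro z hz
    have hz0 : 0 < ‖z‖ := norm_pos_iff.2 hz
    have hmem : ‖z‖⁻¹ • z ∈ Metric.sphere (0:EuclideanSpace ℝ (Fin n)) 1 :=
      mem_sphere_zero_iff_norm.2 (norm_smul_inv_norm hz)
    rw [hH', hg_hom z hz, hg'eq hmem]
    simp only []
    congr 1
    rw [Real.rpow_def_of_pos hz0]
    ring_nf
  have hHmeas : Measurable H := by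
    apply Measurable.mul
    · exact hg'lip.continuous.measurable.comp ((measurable_norm.inv).smul measurable_id)
    · exact (measurable_const.mul measurable_norm.log).exp
  have hHbd : ∀ z : EuclideanSpace ℝ (Fin n), 1 ≤ ‖z‖ → |H z| ≤ K := by
    intro z hz
    have hz0 : z ≠ 0 := norm_pos_iff.1 (lt_of_lt_of_le one_pos hz)
    rw [hHg z hz0, hg_hom z hz0]
    have h1 : |g (‖z‖⁻¹ • z)| ≤ K := hK _ (norm_smul_inv_norm hz0)
    have h2 : ‖z‖ ^ (α - (n:ℝ)) ≤ 1 :=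
      Real.rpow_le_one_of_one_le_of_nonpos hz (by linarith)
    have h3 : (0:ℝ) ≤ ‖z‖ ^ (α - (n:ℝ)) := Real.rpow_nonneg (norm_nonneg z) _
    rw [abs_mul, abs_of_nonneg h3]
    calc |g (‖z‖⁻¹ • z)| * ‖z‖ ^ (α - (n:ℝ)) ≤ K * 1 := mul_le_mul h1 h2 h3 hK0
      _ = K := mul_one K
  have hker : ∀ a b : EuclideanSpace ℝ (Fin n), R ≤ ‖a‖ → R ≤ ‖b‖ →
      |H a - H b| ≤ C / R * ‖a - b‖ := by
    intro a b ha hb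
    rw [hHg a (norm_pos_iff.1 (hR0.trans_le ha)), hHg b (norm_pos_iff.1 (hR0.trans_le hb))]
    rcases le_total ‖a‖ ‖b‖ with h | h
    · exact aux_kernel hαn g hg_hom hM hlip hK hR ha hb h
    · rw [abs_sub_comm, norm_sub_rev]
      exact aux_kernel hαn g hg_hom hM hlip hK hR hb ha h
  -- integrability facts
  set pp := ENNReal.ofReal ((n:ℝ)/α) with hpp'
  have hna : (1:ℝ) ≤ (n:ℝ)/α := by rw [le_div_iff₀ hα]; linarith
  have hpp1 : 1 ≤ pp := by
    rw [hpp', ← ENNReal.ofReal_one]; exact ENNReal.ofReal_le_ofReal hna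
  have hfa : AEStronglyMeasurable f volume := hf.aestronglyMeasurable
  have hppt : pp.toReal = (n:ℝ)/α := ENNReal.toReal_ofReal (by positivity)
  have hL1 : eLpNorm f 1 volume ≤ eLpNorm f pp volume := by
    calc eLpNorm f 1 volume
        = eLpNorm f 1 (volume.restrict (Function.support f)) :=
          (eLpNorm_restrict_eq_of_support_subset subset_rfl).symm
      _ ≤ eLpNorm f pp (volume.restrict (Function.support f)) *
            (volume.restrict (Function.support f) Set.univ)
              ^ (1/(1:ℝ≥0∞).toReal - 1/pp.toReal) :=
          eLpNorm_le_eLpNorm_mul_rpow_measure_univ hpp1 hfa.restrict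
      _ ≤ eLpNorm f pp (volume.restrict (Function.support f)) * 1 := by
          refine mul_le_mul_right (ENNReal.rpow_le_one ?_ ?_) _
          · rw [Measure.restrict_apply_univ]; exact hsupp
          · rw [ENNReal.toReal_one, hppt]
            have h1 : 1/((n:ℝ)/α) ≤ 1 := by
              rw [div_le_one (by positivity)]; linarith
            linarith
      _ = eLpNorm f pp (volume.restrict (Function.support f)) := mul_one _
      _ = eLpNorm f pp volume := eLpNorm_restrict_eq_of_support_subset subset_rfl
  have hfint : Integrable f volume :=
    memLp_one_iff_integrable.1 ⟨hfa, lt_of_le_of_lt hL1 hf.2⟩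
  have hIf : ∫ y, |f y| ≤ (eLpNorm f pp volume).toReal := by
    have h1 : ∫ y, |f y| = (eLpNorm f 1 volume).toReal := by
      rw [eLpNorm_one_eq_lintegral_enorm, ← integral_norm_eq_lintegral_enorm hfa]
      simp [Real.norm_eq_abs]
    rw [h1]
    exact ENNReal.toReal_mono hf.2.ne hL1
  -- pointwise equality of integrands on F
  have hz : ∀ x ∈ F, ∀ y, g (x - y) * f y = H (x - y) * f y := by
    intro x hx y
    by_cases hy : f y = 0
    · rw [hy, mul_zero, mul_zero]
    · have hy' : y ∈ tsupport f := subset_tsupport f (Function.mem_support.2 hy)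
      have hd := hdist x hx y hy'
      rw [dist_eq_norm] at hd
      have hne2 : x - y ≠ 0 := norm_pos_iff.1 (lt_of_lt_of_le hR0 hd)
      rw [hHg _ hne2]
  have hintH : ∀ x ∈ F, Integrable (fun y => H (x - y) * f y) volume := by
    intro x hx
    have hmeas : AEStronglyMeasurable (fun y => H (x - y) * f y) volume := by
      refine AEStronglyMeasurable.mul ?_ hfa
      exact (hHmeas.comp (measurable_const.sub measurable_id)).aestronglyMeasurable
    refine Integrable.mono (hfint.const_mul K) hmeas ?_
    filter_upwards with y
    by_cases hy : f y = 0
    · simp [hy]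
    · have hy' : y ∈ tsupport f := subset_tsupport f (Function.mem_support.2 hy)
      have hd := hdist x hx y hy'
      rw [dist_eq_norm] at hd
      have h1 : 1 ≤ ‖x - y‖ := le_trans hR hd
      have e1 : |H (x - y) * f y| = |H (x - y)| * |f y| := abs_mul _ _
      have e2 : |K * f y| = |K| * |f y| := abs_mul _ _
      rw [Real.norm_eq_abs, Real.norm_eq_abs, e1, e2]
      exact mul_le_mul_of_nonneg_right ((hHbd _ h1).trans (le_abs_self K)) (abs_nonneg _)
  have hTg : ∀ x ∈ F, Tg g f x = ∫ y, H (x - y) * f y := by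
    intro x hx
    exact integral_congr_ae (Filter.Eventually.of_forall (hz x hx))
  rw [hTg x₁ hx₁, hTg x₂ hx₂, ← integral_sub (hintH x₁ hx₁) (hintH x₂ hx₂)]
  have habs : |∫ y, (H (x₁ - y) * f y - H (x₂ - y) * f y)|
      ≤ ∫ y, (C / R * ‖x₁ - x₂‖) * |f y| := by
    refine le_trans (by simpa [Real.norm_eq_abs] using
      norm_integral_le_integral_norm (fun y => H (x₁ - y) * f y - H (x₂ - y) * f y)) ?_
    refine integral_mono ((hintH x₁ hx₁).sub (hintH x₂ hx₂)).abs
      ((hfint.abs).const_mul _) ?_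
    intro y
    by_cases hy : f y = 0
    · simp [hy]
    · have hy' : y ∈ tsupport f := subset_tsupport f (Function.mem_support.2 hy)
      have hd1 := hdist x₁ hx₁ y hy'
      have hd2 := hdist x₂ hx₂ y hy'
      rw [dist_eq_norm] at hd1 hd2
      have hk := hker (x₁ - y) (x₂ - y) hd1 hd2
      have hsub : (x₁ - y) - (x₂ - y) = x₁ - x₂ := by abel
      rw [hsub] at hk
      calc |H (x₁ - y) * f y - H (x₂ - y) * f y|
          = |H (x₁ - y) - H (x₂ - y)| * |f y| := by
            rw [← abs_mul]; congr 1; ring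
        _ ≤ (C / R * ‖x₁ - x₂‖) * |f y| :=
            mul_le_mul_of_nonneg_right hk (abs_nonneg _)
  refine habs.trans ?_
  rw [MeasureTheory.integral_const_mul]
  have hI0 : 0 ≤ ∫ y, |f y| := integral_nonneg fun y => abs_nonneg _
  have hN0 : 0 ≤ (eLpNorm f pp volume).toReal := ENNReal.toReal_nonneg
  have hd0 : (0:ℝ) ≤ ‖x₁ - x₂‖ := norm_nonneg _
  calc C / R * ‖x₁ - x₂‖ * ∫ y, |f y|
      ≤ C / R * ‖x₁ - x₂‖ * (eLpNorm f pp volume).toReal := by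
        refine mul_le_mul_of_nonneg_left hIf (by positivity)
    _ ≤ (C + 1) / R * (eLpNorm f pp volume).toReal * ‖x₁ - x₂‖ := by
        have : C / R ≤ (C + 1) / R := by gcongr; linarith
        nlinarith [mul_nonneg hN0 hd0, div_nonneg hC0 hR0.le]
end

section
/- Let 0 < α < n and let g : ℝⁿ\{0} → ℝ be homogeneous of degree α−n and bounded on the unit sphere, f ∈ L^{n/α}(ℝⁿ) with |supp f| ≤ κ. Then there exists C = C(n,α,g) such that for all measurable E ⊆ ℝⁿ with |E| < ∞: (∫_E |T_g f|^{n/α})^{α/n} ≤ C·(|E|^{α/n} + κ^{α/n})·‖f‖_{n/α}. -/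
open Real MeasureTheory ENNReal

section Aux

variable {n : ℕ} {α : ℝ}

/-- The model kernel `‖z‖ ^ (α - n)`, as an `ℝ≥0∞`-valued function. -/
noncomputable def rieszKer (n : ℕ) (α : ℝ) (z : EuclideanSpace ℝ (Fin n)) : ℝ≥0∞ :=
  ENNReal.ofReal (‖z‖ ^ (α - n))

lemma rieszKer_meas : Measurable (rieszKer n α) := by
  unfold rieszKer
  fun_prop

/-- Finiteness of the kernel integral over the unit ball. -/
lemma rieszKer_ball_one_lt_top (hα : 0 < α) (hαn : α < n) :
    ∫⁻ z in Metric.ball (0 : EuclideanSpace ℝ (Fin n)) 1, rieszKer n α z < ⊤ := by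
  have hn : 0 < (n : ℝ) := hα.trans hαn
  set μ := (volume : Measure (EuclideanSpace ℝ (Fin n))).restrict
    (Metric.ball (0 : EuclideanSpace ℝ (Fin n)) 1) with hμ
  have hmeas : AEMeasurable (fun z : EuclideanSpace ℝ (Fin n) => ‖z‖ ^ (α - n)) μ := by
    fun_prop
  have hnn : 0 ≤ᶠ[ae μ] fun z : EuclideanSpace ℝ (Fin n) => ‖z‖ ^ (α - n) :=
    Filter.Eventually.of_forall fun z => Real.rpow_nonneg (norm_nonneg z) _
  have hlc := lintegral_eq_lintegral_meas_le μ hnn hmeas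
  have : ∫⁻ z, ENNReal.ofReal (‖z‖ ^ (α - n)) ∂μ < ⊤ := by
    rw [hlc]
    -- bound the measure of superlevel sets
    have hsub : ∀ t : ℝ, 0 < t →
        {a : EuclideanSpace ℝ (Fin n) | t ≤ ‖a‖ ^ (α - n)} ⊆
          Metric.closedBall 0 (t ^ (1 / (α - n))) := by
      intro t ht a ha
      simp only [Set.mem_setOf_eq] at ha
      rcases eq_or_ne a 0 with rfl | ha0
      · exfalso
        rw [norm_zero, Real.zero_rpow (by linarith : α - (n : ℝ) ≠ 0)] at ha
        linarith
      · have hz : (1 : ℝ) / (α - n) ≤ 0 := by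
          rw [one_div]
          exact inv_nonpos.2 (by linarith)
        have h3 := Real.rpow_le_rpow_of_nonpos ht ha hz
        rw [Metric.mem_closedBall, dist_zero_right]
        have h2 : (‖a‖ ^ (α - n)) ^ (1 / (α - n)) = ‖a‖ := by
          rw [← Real.rpow_mul (norm_nonneg a), mul_one_div, div_self (by linarith : α - (n:ℝ) ≠ 0),
            Real.rpow_one]
        calc ‖a‖ = (‖a‖ ^ (α - n)) ^ (1 / (α - n)) := h2.symm
          _ ≤ t ^ (1 / (α - n)) := h3
    have hball : ∀ t : ℝ, μ {a | t ≤ ‖a‖ ^ (α - n)} ≤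
        volume (Metric.ball (0 : EuclideanSpace ℝ (Fin n)) 1) := by
      intro t
      refine (measure_mono (Set.subset_univ _)).trans ?_
      rw [Measure.restrict_apply_univ]
    have hvb : volume (Metric.ball (0 : EuclideanSpace ℝ (Fin n)) 1) < ⊤ :=
      measure_ball_lt_top
    calc ∫⁻ t in Set.Ioi (0:ℝ), μ {a | t ≤ ‖a‖ ^ (α - n)}
        ≤ ∫⁻ t in Set.Ioc (0:ℝ) 1 ∪ Set.Ioi 1, μ {a | t ≤ ‖a‖ ^ (α - n)} :=
          lintegral_mono_set Set.Ioi_subset_Ioc_union_Ioi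
      _ ≤ (∫⁻ t in Set.Ioc (0:ℝ) 1, μ {a | t ≤ ‖a‖ ^ (α - n)}) +
            ∫⁻ t in Set.Ioi (1:ℝ), μ {a | t ≤ ‖a‖ ^ (α - n)} := lintegral_union_le _ _ _
      _ < ⊤ := by
          refine ENNReal.add_lt_top.2 ⟨?_, ?_⟩
          · calc (∫⁻ t in Set.Ioc (0:ℝ) 1, μ {a | t ≤ ‖a‖ ^ (α - n)})
                ≤ ∫⁻ _ in Set.Ioc (0:ℝ) 1, volume (Metric.ball (0 : EuclideanSpace ℝ (Fin n)) 1) :=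
                  lintegral_mono fun t => hball t
              _ = volume (Metric.ball (0 : EuclideanSpace ℝ (Fin n)) 1)
                    * volume (Set.Ioc (0:ℝ) 1) := setLIntegral_const _ _
              _ < ⊤ := by
                  refine ENNReal.mul_lt_top hvb ?_
                  simp [Real.volume_Ioc]
          · have hexp : (n : ℝ) / (α - n) < -1 := by
              rw [div_lt_iff_of_neg (by linarith : α - (n:ℝ) < 0)]
              linarith
            have hint : IntegrableOn (fun t : ℝ => t ^ ((n:ℝ) / (α - n))) (Set.Ioi 1) volume :=
              integrableOn_Ioi_rpow_of_lt hexp one_pos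
            have hbound : ∀ t ∈ Set.Ioi (1:ℝ), μ {a | t ≤ ‖a‖ ^ (α - n)} ≤
                ENNReal.ofReal (t ^ ((n:ℝ) / (α - n))) *
                  volume (Metric.ball (0 : EuclideanSpace ℝ (Fin n)) 1) := by
              intro t ht
              have ht0 : (0:ℝ) < t := lt_trans one_pos ht
              have h1 : μ {a | t ≤ ‖a‖ ^ (α - n)} ≤
                  volume (Metric.closedBall (0 : EuclideanSpace ℝ (Fin n)) (t ^ (1 / (α - n)))) :=
                (Measure.restrict_apply_le _ _).trans (measure_mono (hsub t ht0))
              have hr0 : 0 ≤ t ^ (1 / (α - n)) := Real.rpow_nonneg ht0.le _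
              rw [Measure.addHaar_closedBall _ _ hr0] at h1
              refine h1.trans (le_of_eq ?_)
              congr 1
              rw [finrank_euclideanSpace_fin, ← Real.rpow_natCast (t ^ (1 / (α - n))) n,
                ← Real.rpow_mul ht0.le, one_div, inv_mul_eq_div]
            calc (∫⁻ t in Set.Ioi (1:ℝ), μ {a | t ≤ ‖a‖ ^ (α - n)})
                ≤ ∫⁻ t in Set.Ioi (1:ℝ), ENNReal.ofReal (t ^ ((n:ℝ) / (α - n))) *
                    volume (Metric.ball (0 : EuclideanSpace ℝ (Fin n)) 1) :=
                  setLIntegral_mono' measurableSet_Ioi hbound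
              _ = (∫⁻ t in Set.Ioi (1:ℝ), ENNReal.ofReal (t ^ ((n:ℝ) / (α - n)))) *
                    volume (Metric.ball (0 : EuclideanSpace ℝ (Fin n)) 1) := by
                  rw [lintegral_mul_const' _ _ hvb.ne]
              _ < ⊤ := ENNReal.mul_lt_top hint.setLIntegral_lt_top hvb
  simpa [rieszKer, hμ] using this

/-- Scaling of the kernel integral over balls. -/
lemma rieszKer_ball_scale (hα : 0 < α) (hαn : α < n) {R : ℝ} (hR : 0 < R) :
    ∫⁻ z in Metric.ball (0 : EuclideanSpace ℝ (Fin n)) R, rieszKer n α z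
      = ENNReal.ofReal (R ^ α) *
        ∫⁻ z in Metric.ball (0 : EuclideanSpace ℝ (Fin n)) 1, rieszKer n α z := by
  have hn : 0 < (n : ℝ) := hα.trans hαn
  set k := rieszKer n α
  have hkm : Measurable k := rieszKer_meas
  set I := fun r : ℝ => (Metric.ball (0 : EuclideanSpace ℝ (Fin n)) r).indicator k
  have hIm : ∀ r, Measurable (I r) := fun r => hkm.indicator measurableSet_ball
  have hmap : Measure.map (fun x : EuclideanSpace ℝ (Fin n) => R • x) volume
      = ENNReal.ofReal |(R ^ Module.finrank ℝ (EuclideanSpace ℝ (Fin n)))⁻¹| • volume :=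
    Measure.map_addHaar_smul volume hR.ne'
  have hsmul : Measurable (fun x : EuclideanSpace ℝ (Fin n) => R • x) :=
    (continuous_const_smul R).measurable
  have key : ∫⁻ w, I R (R • w) = ENNReal.ofReal ((R ^ n)⁻¹) * ∫⁻ z, I R z := by
    rw [← lintegral_map (hIm R) hsmul, hmap, lintegral_smul_measure,
      finrank_euclideanSpace_fin, abs_of_pos (by positivity), smul_eq_mul]
  have hpt : ∀ w, I R (R • w) = ENNReal.ofReal (R ^ (α - n)) * I 1 w := by
    intro w
    have hnorm : ‖R • w‖ = R * ‖w‖ := by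
      rw [norm_smul, Real.norm_eq_abs, abs_of_pos hR]
    by_cases hw : w ∈ Metric.ball (0 : EuclideanSpace ℝ (Fin n)) 1
    · have hw1 : ‖w‖ < 1 := by simpa [Metric.mem_ball, dist_zero_right] using hw
      have hmem : R • w ∈ Metric.ball (0 : EuclideanSpace ℝ (Fin n)) R := by
        simp only [Metric.mem_ball, dist_zero_right, hnorm]
        nlinarith [norm_nonneg w]
      simp only [I, Set.indicator_of_mem hmem, Set.indicator_of_mem hw]
      show rieszKer n α (R • w) = _ * rieszKer n α w
      unfold rieszKer
      rw [hnorm, Real.mul_rpow hR.le (norm_nonneg w),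
        ENNReal.ofReal_mul (Real.rpow_nonneg hR.le _)]
    · have hw1 : 1 ≤ ‖w‖ := by
        by_contra h
        exact hw (by simpa [Metric.mem_ball, dist_zero_right] using lt_of_not_ge h)
      have hmem : R • w ∉ Metric.ball (0 : EuclideanSpace ℝ (Fin n)) R := by
        simp only [Metric.mem_ball, dist_zero_right, hnorm, not_lt]
        nlinarith
      simp only [I, Set.indicator_of_notMem hmem, Set.indicator_of_notMem hw, mul_zero]
  have key2 : ENNReal.ofReal (R ^ (α - n)) * ∫⁻ w, I 1 w
      = ENNReal.ofReal ((R ^ n)⁻¹) * ∫⁻ z, I R z := by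
    rw [← key, ← lintegral_const_mul' _ _ ENNReal.ofReal_ne_top]
    exact lintegral_congr fun w => (hpt w).symm
  have hRn0 : ENNReal.ofReal ((R:ℝ) ^ n) ≠ 0 := by
    simp only [ne_eq, ENNReal.ofReal_eq_zero, not_le]
    positivity
  have e1 : ∫⁻ z, I R z = ENNReal.ofReal (R ^ n) * (ENNReal.ofReal (R ^ (α - n)) * ∫⁻ w, I 1 w) := by
    rw [key2, ← mul_assoc, ← ENNReal.ofReal_mul (by positivity),
      mul_inv_cancel₀ (by positivity : (R:ℝ) ^ n ≠ 0), ENNReal.ofReal_one, one_mul]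
  have e2 : ENNReal.ofReal ((R:ℝ) ^ n) * ENNReal.ofReal (R ^ (α - n)) = ENNReal.ofReal (R ^ α) := by
    rw [← ENNReal.ofReal_mul (by positivity), ← Real.rpow_natCast R n,
      ← Real.rpow_add hR]
    norm_num
  calc ∫⁻ z in Metric.ball (0 : EuclideanSpace ℝ (Fin n)) R, k z
      = ∫⁻ z, I R z := (lintegral_indicator measurableSet_ball k).symm
    _ = ENNReal.ofReal (R ^ α) * ∫⁻ w, I 1 w := by rw [e1, ← mul_assoc, e2]
    _ = ENNReal.ofReal (R ^ α) *
          ∫⁻ z in Metric.ball (0 : EuclideanSpace ℝ (Fin n)) 1, k z := by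
        rw [lintegral_indicator measurableSet_ball k]

end Aux

section Core

variable {n : ℕ} {α : ℝ}

set_option maxHeartbeats 1000000 in
lemma core_estimate (hα : 0 < α) (hαn : α < n) {M : ℝ} (hM0 : 0 ≤ M)
    {g : EuclideanSpace ℝ (Fin n) → ℝ}
    (hgk : ∀ z : EuclideanSpace ℝ (Fin n), z ≠ 0 → |g z| ≤ M * ‖z‖ ^ (α - n))
    {f : EuclideanSpace ℝ (Fin n) → ℝ} (hfm : Measurable f) {κ : ℝ} (hκ : 0 < κ)
    (hf : MemLp f (ENNReal.ofReal ((n : ℝ) / α)) volume)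
    (hsupp : volume (Function.support f) ≤ ENNReal.ofReal κ)
    (s : Set (EuclideanSpace ℝ (Fin n))) (hs : MeasurableSet s) (hsfin : volume s < ⊤) :
    (∫⁻ x in s, ENNReal.ofReal (|Tg g f x| ^ ((n : ℝ) / α))) ^ (α / (n : ℝ))
      ≤ ENNReal.ofReal M *
        (((∫⁻ z in Metric.ball (0 : EuclideanSpace ℝ (Fin n)) 1, rieszKer n α z) *
            ENNReal.ofReal (κ ^ (α / (n : ℝ))) + (volume s) ^ (α / (n : ℝ))) *
          eLpNorm f (ENNReal.ofReal ((n : ℝ) / α)) volume) := by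
  have hn : 0 < (n : ℝ) := hα.trans hαn
  have hna : 0 < (n : ℝ) - α := by linarith
  set p : ℝ := (n : ℝ) / α with hp
  set q : ℝ := (n : ℝ) / ((n : ℝ) - α) with hq
  have hp1 : 1 < p := by rw [hp, lt_div_iff₀ hα]; linarith
  have hp0 : 0 < p := lt_trans one_pos hp1
  have hq0 : 0 < q := by rw [hq]; positivity
  have hpq : p.HolderConjugate q := by
    rw [Real.holderConjugate_iff]
    constructor
    · exact hp1
    · rw [hp, hq, inv_div, inv_div, ← add_div]
      field_simp
      ring
  have h1p : α / (n : ℝ) = 1 / p := by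
    rw [hp]; field_simp
  set R : ℝ := κ ^ (1 / (n : ℝ)) with hRdef
  have hR0 : 0 < R := Real.rpow_pos_of_pos hκ _
  set B := Metric.ball (0 : EuclideanSpace ℝ (Fin n)) R with hB
  set k := rieszKer n α with hk
  have hkm : Measurable k := rieszKer_meas
  set kN := B.indicator k with hkN
  set kF := Bᶜ.indicator k with hkF
  have hkNm : Measurable kN := hkm.indicator measurableSet_ball
  have hkFm : Measurable kF := hkm.indicator measurableSet_ball.compl
  have hksplit : ∀ z, k z = kN z + kF z := fun z =>
    (congrFun (B.indicator_self_add_compl k) z).symm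
  set F := fun y : EuclideanSpace ℝ (Fin n) => (‖f y‖₊ : ℝ≥0∞) with hF
  have hFm : Measurable F := hfm.enorm
  set J := ∫⁻ y, F y ^ p with hJ
  set A := ∫⁻ z, kN z with hA
  have hAball : A = ∫⁻ z in B, k z := lintegral_indicator measurableSet_ball k
  have hAval : A = ENNReal.ofReal (R ^ α) *
      ∫⁻ z in Metric.ball (0 : EuclideanSpace ℝ (Fin n)) 1, rieszKer n α z := by
    rw [hAball, hB, hk]; exact rieszKer_ball_scale hα hαn hR0
  have hAtop : A ≠ ⊤ := by
    rw [hAval]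
    exact (ENNReal.mul_lt_top ENNReal.ofReal_lt_top (rieszKer_ball_one_lt_top hα hαn)).ne
  set N := fun x => ∫⁻ y, kN (x - y) * F y with hN
  set Fa := fun x => ∫⁻ y, kF (x - y) * F y with hFa
  have hNm : Measurable N :=
    Measurable.lintegral_prod_right (f := fun x y => kN (x - y) * F y)
      ((hkNm.comp (measurable_fst.sub measurable_snd)).mul (hFm.comp measurable_snd))
  have hFam : Measurable Fa :=
    Measurable.lintegral_prod_right (f := fun x y => kF (x - y) * F y)
      ((hkFm.comp (measurable_fst.sub measurable_snd)).mul (hFm.comp measurable_snd))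
  -- Step A : pointwise bound on the potential
  have hTgle : ∀ x, (‖Tg g f x‖₊ : ℝ≥0∞) ≤ ENNReal.ofReal M * (N x + Fa x) := by
    intro x
    have h1 : (‖Tg g f x‖₊ : ℝ≥0∞) ≤ ∫⁻ y, (‖g (x - y) * f y‖₊ : ℝ≥0∞) :=
      enorm_integral_le_lintegral_enorm _
    have hae : ∀ᵐ y : EuclideanSpace ℝ (Fin n), y ≠ x := by
      haveI : Nontrivial (EuclideanSpace ℝ (Fin n)) := by
        have hn' : 0 < n := by exact_mod_cast hn
        refine ⟨⟨EuclideanSpace.single ⟨0, hn'⟩ 1, 0, fun h => one_ne_zero (α := ℝ) ?_⟩⟩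
        have := congrArg (fun v : EuclideanSpace ℝ (Fin n) => v ⟨0, hn'⟩) h
        simpa [EuclideanSpace.single_apply] using this
      rw [ae_iff]
      have hset : {y : EuclideanSpace ℝ (Fin n) | ¬ y ≠ x} = {x} := by ext y; simp
      rw [hset]
      exact measure_singleton x
    have h2 : (∫⁻ y, (‖g (x - y) * f y‖₊ : ℝ≥0∞))
        ≤ ∫⁻ y, (ENNReal.ofReal M * k (x - y)) * F y := by
      refine lintegral_mono_ae (hae.mono fun y hy => ?_)
      have hz : x - y ≠ 0 := sub_ne_zero.2 (Ne.symm hy)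
      have e1 : (‖g (x - y) * f y‖₊ : ℝ≥0∞) = (‖g (x - y)‖₊ : ℝ≥0∞) * F y := by
        rw [nnnorm_mul]; push_cast; rfl
      rw [e1]
      gcongr
      rw [← enorm_eq_nnnorm, Real.enorm_eq_ofReal_abs]
      calc ENNReal.ofReal |g (x - y)| ≤ ENNReal.ofReal (M * ‖x - y‖ ^ (α - n)) :=
            ENNReal.ofReal_le_ofReal (hgk _ hz)
        _ = ENNReal.ofReal M * k (x - y) := by
            rw [ENNReal.ofReal_mul hM0]; rfl
    have h3 : (∫⁻ y, (ENNReal.ofReal M * k (x - y)) * F y)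
        = ENNReal.ofReal M * ∫⁻ y, k (x - y) * F y := by
      simp_rw [mul_assoc]
      exact lintegral_const_mul' _ _ ENNReal.ofReal_ne_top
    have h4 : (∫⁻ y, k (x - y) * F y) = N x + Fa x := by
      calc (∫⁻ y, k (x - y) * F y)
          = ∫⁻ y, (kN (x - y) * F y + kF (x - y) * F y) :=
            lintegral_congr fun y => by rw [hksplit (x - y), add_mul]
        _ = N x + Fa x :=
            lintegral_add_left ((hkNm.comp (measurable_const.sub measurable_id)).mul hFm) _
    calc (‖Tg g f x‖₊ : ℝ≥0∞) ≤ ∫⁻ y, (‖g (x - y) * f y‖₊ : ℝ≥0∞) := h1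
      _ ≤ ∫⁻ y, (ENNReal.ofReal M * k (x - y)) * F y := h2
      _ = ENNReal.ofReal M * (N x + Fa x) := by rw [h3, h4]
  -- Step B : uniform bound for the far part
  have hFaB : ∀ x, Fa x ≤ J ^ (1 / p) := by
    intro x
    set S := Function.support f with hS
    have hSm : MeasurableSet S := by
      rw [hS, Function.support_eq_preimage]
      exact hfm (measurableSet_singleton 0).compl
    set u := fun y => kF (x - y) * S.indicator 1 y with hu
    have hum : Measurable u :=
      (hkFm.comp (measurable_const.sub measurable_id)).mul (measurable_one.indicator hSm)
    have hrw : ∀ y, kF (x - y) * F y = u y * F y := by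
      intro y
      by_cases hy : f y = 0
      · have : F y = 0 := by simp [hF, hy]
        rw [this, mul_zero, mul_zero]
      · have hyS : y ∈ S := hy
        rw [hu]; simp only [Set.indicator_of_mem hyS, Pi.one_apply, mul_one]
    have hH := ENNReal.lintegral_mul_le_Lp_mul_Lq volume hpq.symm hum.aemeasurable hFm.aemeasurable
    simp only [Pi.mul_apply] at hH
    have huq : (∫⁻ y, u y ^ q) ≤ 1 := by
      have hpt : ∀ y, u y ^ q ≤ ENNReal.ofReal (R ^ (-(n : ℝ))) * S.indicator 1 y := by
        intro y
        by_cases hy : y ∈ S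
        · rw [hu]
          simp only [Set.indicator_of_mem hy, Pi.one_apply, mul_one]
          by_cases hb : (x - y) ∈ Bᶜ
          · have hge : R ≤ ‖x - y‖ := by
              have : ¬ (x - y) ∈ B := hb
              simpa [hB, Metric.mem_ball, dist_zero_right, not_lt] using this
            rw [hkF]
            simp only [Set.indicator_of_mem hb]
            show (rieszKer n α (x - y)) ^ q ≤ _
            unfold rieszKer
            rw [ENNReal.ofReal_rpow_of_nonneg (Real.rpow_nonneg (norm_nonneg _) _) hq0.le,
              ← Real.rpow_mul (norm_nonneg _)]
            have hexp : (α - n) * q = -(n : ℝ) := by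
              rw [hq]; field_simp; ring
            rw [hexp]
            exact ENNReal.ofReal_le_ofReal
              (Real.rpow_le_rpow_of_nonpos hR0 hge (by simp [hn.le]))
          · rw [hkF]
            simp only [Set.indicator_of_notMem hb]
            rw [ENNReal.zero_rpow_of_pos hq0]
            exact zero_le
        · rw [hu]
          simp only [Set.indicator_of_notMem hy, mul_zero,
            ENNReal.zero_rpow_of_pos hq0]
          exact zero_le
      have hRκ : R ^ (-(n : ℝ)) * κ = 1 := by
        rw [hRdef, ← Real.rpow_mul hκ.le]
        have : 1 / (n : ℝ) * (-(n : ℝ)) = -1 := by field_simp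
        rw [this, Real.rpow_neg_one]
        exact inv_mul_cancel₀ hκ.ne'
      calc (∫⁻ y, u y ^ q)
          ≤ ∫⁻ y, ENNReal.ofReal (R ^ (-(n : ℝ))) * S.indicator 1 y := lintegral_mono hpt
        _ = ENNReal.ofReal (R ^ (-(n : ℝ))) * volume S := by
            rw [lintegral_const_mul' _ _ ENNReal.ofReal_ne_top, lintegral_indicator_one hSm]
        _ ≤ ENNReal.ofReal (R ^ (-(n : ℝ))) * ENNReal.ofReal κ := by gcongr
        _ = 1 := by
            rw [← ENNReal.ofReal_mul (Real.rpow_nonneg hR0.le _), hRκ, ENNReal.ofReal_one]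
    calc Fa x = ∫⁻ y, u y * F y := lintegral_congr fun y => hrw y
      _ ≤ (∫⁻ y, u y ^ q) ^ (1 / q) * (∫⁻ y, F y ^ p) ^ (1 / p) := hH
      _ ≤ 1 ^ (1 / q) * J ^ (1 / p) :=
          mul_le_mul' (ENNReal.rpow_le_rpow huq (by positivity)) le_rfl
      _ = J ^ (1 / p) := by rw [ENNReal.one_rpow, one_mul]
  -- Step C : Schur-type bound for the near part
  have hsub_left : ∀ x : EuclideanSpace ℝ (Fin n),
      (∫⁻ y, kN (x - y)) = A :=
    fun x => (Measure.measurePreserving_sub_left volume x).lintegral_comp hkNm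
  have hsub_right : ∀ y : EuclideanSpace ℝ (Fin n),
      (∫⁻ x, kN (x - y)) = A :=
    fun y => (measurePreserving_sub_right volume y).lintegral_comp hkNm
  have hNx : ∀ x, N x ^ p ≤ A ^ (p / q) * ∫⁻ y, kN (x - y) * F y ^ p := by
    intro x
    have hsplity : ∀ y, kN (x - y) * F y
        = (kN (x - y)) ^ (1 / q) * ((kN (x - y)) ^ (1 / p) * F y) := by
      intro y
      rw [← mul_assoc, ← ENNReal.rpow_add_of_nonneg _ _ (by positivity) (by positivity)]
      have : 1 / q + 1 / p = 1 := by
        rw [one_div, one_div, add_comm]; exact hpq.inv_add_inv_eq_one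
      rw [this, ENNReal.rpow_one]
    have hH := ENNReal.lintegral_mul_le_Lp_mul_Lq volume hpq.symm
      (f := fun y => (kN (x - y)) ^ (1 / q)) (g := fun y => (kN (x - y)) ^ (1 / p) * F y)
      ((hkNm.comp (measurable_const.sub measurable_id)).pow_const _).aemeasurable
      (((hkNm.comp (measurable_const.sub measurable_id)).pow_const _).mul hFm).aemeasurable
    simp only [Pi.mul_apply] at hH
    have e1 : (∫⁻ y, ((kN (x - y)) ^ (1 / q)) ^ q) = A := by
      rw [← hsub_left x]
      refine lintegral_congr fun y => ?_
      rw [← ENNReal.rpow_mul, one_div_mul_cancel hq0.ne', ENNReal.rpow_one]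
    have e2 : (∫⁻ y, ((kN (x - y)) ^ (1 / p) * F y) ^ p) = ∫⁻ y, kN (x - y) * F y ^ p := by
      refine lintegral_congr fun y => ?_
      rw [ENNReal.mul_rpow_of_nonneg _ _ hp0.le, ← ENNReal.rpow_mul,
        one_div_mul_cancel hp0.ne', ENNReal.rpow_one]
    have hNle : N x ≤ A ^ (1 / q) * (∫⁻ y, kN (x - y) * F y ^ p) ^ (1 / p) := by
      calc N x = ∫⁻ y, (kN (x - y)) ^ (1 / q) * ((kN (x - y)) ^ (1 / p) * F y) :=
            lintegral_congr fun y => hsplity y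
        _ ≤ (∫⁻ y, ((kN (x - y)) ^ (1 / q)) ^ q) ^ (1 / q) *
              (∫⁻ y, ((kN (x - y)) ^ (1 / p) * F y) ^ p) ^ (1 / p) := hH
        _ = A ^ (1 / q) * (∫⁻ y, kN (x - y) * F y ^ p) ^ (1 / p) := by rw [e1, e2]
    calc N x ^ p ≤ (A ^ (1 / q) * (∫⁻ y, kN (x - y) * F y ^ p) ^ (1 / p)) ^ p :=
          ENNReal.rpow_le_rpow hNle hp0.le
      _ = A ^ (p / q) * ∫⁻ y, kN (x - y) * F y ^ p := by
          rw [ENNReal.mul_rpow_of_nonneg _ _ hp0.le, ← ENNReal.rpow_mul, ← ENNReal.rpow_mul,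
            one_div_mul_cancel hp0.ne', ENNReal.rpow_one]
          congr 2
          ring
  have hNint : (∫⁻ x, N x ^ p) ≤ A ^ p * J := by
    have hprod : AEMeasurable (Function.uncurry fun x y => kN (x - y) * F y ^ p)
        ((volume : Measure (EuclideanSpace ℝ (Fin n))).prod volume) := by
      refine Measurable.aemeasurable ?_
      exact ((hkNm.comp (measurable_fst.sub measurable_snd)).mul
        ((hFm.comp measurable_snd).pow_const _))
    have hFytop : ∀ y, F y ^ p ≠ ⊤ :=
      fun y => (ENNReal.rpow_lt_top_of_nonneg hp0.le ENNReal.coe_ne_top).ne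
    have hApq : A ^ (p / q) ≠ ⊤ := ENNReal.rpow_ne_top_of_nonneg (by positivity) hAtop
    calc (∫⁻ x, N x ^ p) ≤ ∫⁻ x, A ^ (p / q) * ∫⁻ y, kN (x - y) * F y ^ p :=
          lintegral_mono hNx
      _ = A ^ (p / q) * ∫⁻ x, ∫⁻ y, kN (x - y) * F y ^ p :=
          lintegral_const_mul' _ _ hApq
      _ = A ^ (p / q) * ∫⁻ y, ∫⁻ x, kN (x - y) * F y ^ p := by
          rw [lintegral_lintegral_swap hprod]
      _ = A ^ (p / q) * ∫⁻ y, A * F y ^ p := by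
          congr 1
          refine lintegral_congr fun y => ?_
          rw [lintegral_mul_const' _ _ (hFytop y), hsub_right y, mul_comm]
      _ = A ^ (p / q) * (A * J) := by
          rw [lintegral_const_mul' _ _ hAtop]
      _ = A ^ p * J := by
          rw [← mul_assoc]
          congr 1
          have hpqe : p / q + 1 = p := by
            have h := hpq.inv_add_inv_eq_one
            field_simp
            field_simp at h
            linarith [h]
          calc A ^ (p / q) * A = A ^ (p / q) * A ^ (1 : ℝ) := by rw [ENNReal.rpow_one]
            _ = A ^ (p / q + 1) := (ENNReal.rpow_add_of_nonneg _ _ (by positivity) zero_le_one).symm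
            _ = A ^ p := by rw [hpqe]
  -- Step D : assemble
  have hLnorm : eLpNorm f (ENNReal.ofReal p) volume = J ^ (1 / p) := by
    rw [eLpNorm_eq_lintegral_rpow_enorm_toReal
        (by rw [ne_eq, ENNReal.ofReal_eq_zero]; exact not_le.2 hp0) ENNReal.ofReal_ne_top,
      ENNReal.toReal_ofReal hp0.le]
    rfl
  have hJtop : J ≠ ⊤ := by
    intro hcon
    have h2 := hf.2
    rw [hLnorm, hcon, ENNReal.top_rpow_of_pos (by positivity : (0:ℝ) < 1 / p)] at h2
    exact lt_irrefl _ h2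
  have hintconv : (∫⁻ x in s, ENNReal.ofReal (|Tg g f x| ^ p))
      = ∫⁻ x in s, (‖Tg g f x‖₊ : ℝ≥0∞) ^ p := by
    refine lintegral_congr fun x => ?_
    rw [← enorm_eq_nnnorm, Real.enorm_eq_ofReal_abs, ENNReal.ofReal_rpow_of_nonneg (abs_nonneg _) hp0.le]
  rw [h1p, hintconv]
  have main : (∫⁻ x in s, (‖Tg g f x‖₊ : ℝ≥0∞) ^ p) ^ (1 / p)
      ≤ ENNReal.ofReal M * (A * J ^ (1 / p) + J ^ (1 / p) * (volume s) ^ (1 / p)) := by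
    have step1 : (∫⁻ x in s, (‖Tg g f x‖₊ : ℝ≥0∞) ^ p)
        ≤ ∫⁻ x in s, (ENNReal.ofReal M) ^ p * ((N + Fa) x) ^ p := by
      refine lintegral_mono fun x => ?_
      rw [← ENNReal.mul_rpow_of_nonneg _ _ hp0.le]
      exact ENNReal.rpow_le_rpow (hTgle x) hp0.le
    have step2 : (∫⁻ x in s, (ENNReal.ofReal M) ^ p * ((N + Fa) x) ^ p)
        = (ENNReal.ofReal M) ^ p * ∫⁻ x in s, ((N + Fa) x) ^ p :=
      lintegral_const_mul' _ _ (ENNReal.rpow_ne_top_of_nonneg hp0.le ENNReal.ofReal_ne_top)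
    have step3 : ((∫⁻ x in s, ((N + Fa) x) ^ p)) ^ (1 / p)
        ≤ (∫⁻ x in s, N x ^ p) ^ (1 / p) + (∫⁻ x in s, Fa x ^ p) ^ (1 / p) :=
      ENNReal.lintegral_Lp_add_le hNm.aemeasurable hFam.aemeasurable hp1.le
    have bound1 : (∫⁻ x in s, N x ^ p) ^ (1 / p) ≤ A * J ^ (1 / p) := by
      have h1 : (∫⁻ x in s, N x ^ p) ≤ ∫⁻ x, N x ^ p :=
        setLIntegral_le_lintegral _ _
      have h2 : (∫⁻ x in s, N x ^ p) ^ (1 / p) ≤ (A ^ p * J) ^ (1 / p) :=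
        ENNReal.rpow_le_rpow (h1.trans hNint) (by positivity)
      refine h2.trans (le_of_eq ?_)
      rw [ENNReal.mul_rpow_of_nonneg _ _ (by positivity), ← ENNReal.rpow_mul,
        mul_one_div, div_self hp0.ne', ENNReal.rpow_one]
    have bound2 : (∫⁻ x in s, Fa x ^ p) ^ (1 / p) ≤ J ^ (1 / p) * (volume s) ^ (1 / p) := by
      have h1 : (∫⁻ x in s, Fa x ^ p) ≤ ∫⁻ _ in s, (J ^ (1 / p)) ^ p :=
        lintegral_mono fun x => ENNReal.rpow_le_rpow (hFaB x) hp0.le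
      have h2 : (∫⁻ _ in s, (J ^ (1 / p)) ^ p) = (J ^ (1 / p)) ^ p * volume s :=
        setLIntegral_const _ _
      have hJc : (J ^ (1 / p)) ^ p = J := by
        rw [← ENNReal.rpow_mul, one_div_mul_cancel hp0.ne', ENNReal.rpow_one]
      have h3 : (∫⁻ x in s, Fa x ^ p) ^ (1 / p) ≤ (J * volume s) ^ (1 / p) :=
        ENNReal.rpow_le_rpow (h1.trans (le_of_eq (by rw [h2, hJc]))) (by positivity)
      refine h3.trans (le_of_eq ?_)
      rw [ENNReal.mul_rpow_of_nonneg _ _ (by positivity)]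
    have hMc : ((ENNReal.ofReal M) ^ p) ^ (1 / p) = ENNReal.ofReal M := by
      rw [← ENNReal.rpow_mul, mul_one_div, div_self hp0.ne', ENNReal.rpow_one]
    calc (∫⁻ x in s, (‖Tg g f x‖₊ : ℝ≥0∞) ^ p) ^ (1 / p)
        ≤ ((ENNReal.ofReal M) ^ p * ∫⁻ x in s, ((N + Fa) x) ^ p) ^ (1 / p) := by
          refine ENNReal.rpow_le_rpow ?_ (by positivity)
          rw [← step2]
          exact step1
      _ = ENNReal.ofReal M * (∫⁻ x in s, ((N + Fa) x) ^ p) ^ (1 / p) := by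
          rw [ENNReal.mul_rpow_of_nonneg _ _ (by positivity), hMc]
      _ ≤ ENNReal.ofReal M *
            ((∫⁻ x in s, N x ^ p) ^ (1 / p) + (∫⁻ x in s, Fa x ^ p) ^ (1 / p)) :=
          mul_le_mul_right step3 _
      _ ≤ ENNReal.ofReal M * (A * J ^ (1 / p) + J ^ (1 / p) * (volume s) ^ (1 / p)) :=
          mul_le_mul_right (add_le_add bound1 bound2) _
  rw [hLnorm]
  have hRα : ENNReal.ofReal (R ^ α) = ENNReal.ofReal (κ ^ (1 / p)) := by
    congr 1
    rw [hRdef, ← Real.rpow_mul hκ.le]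
    congr 1
    rw [hp]
    field_simp
  refine main.trans (le_of_eq ?_)
  rw [hAval, hRα]
  ring

end Core


/-- Lemma 13 of Fontana–Morpurgo: local `L^{n/α}` bound for `T_g f` when the support
of `f` has measure at most `κ`. -/
theorem stmt8 (n : ℕ) (α : ℝ) (hα : 0 < α) (hαn : α < n)
    (g : EuclideanSpace ℝ (Fin n) → ℝ)
    (hg_hom : ∀ x : EuclideanSpace ℝ (Fin n), x ≠ 0 →
      g x = g (‖x‖⁻¹ • x) * ‖x‖ ^ (α - n))
    (hg_bdd : ∃ M : ℝ, ∀ x : EuclideanSpace ℝ (Fin n), ‖x‖ = 1 → |g x| ≤ M) :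
    ∃ C > 0, ∀ (f : EuclideanSpace ℝ (Fin n) → ℝ) (κ : ℝ)
      (E : Set (EuclideanSpace ℝ (Fin n))), 0 ≤ κ →
      MemLp f (ENNReal.ofReal (n / α)) volume →
      volume (Function.support f) ≤ ENNReal.ofReal κ →
      MeasurableSet E → volume E < ⊤ →
      (∫⁻ x in E, ENNReal.ofReal (|Tg g f x| ^ (n / α))) ^ (α / n)
        ≤ ENNReal.ofReal
            (C * ((volume E).toReal ^ (α / n) + κ ^ (α / n)) *
              (eLpNorm f (ENNReal.ofReal (n / α)) volume).toReal) := by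
  obtain ⟨M, hM⟩ := hg_bdd
  have hn : 0 < (n : ℝ) := hα.trans hαn
  have hnn : 0 < n := by exact_mod_cast hn
  have hM0 : 0 ≤ M := by
    have hx : ‖EuclideanSpace.single (⟨0, hnn⟩ : Fin n) (1:ℝ)‖ = 1 := by
      simp [EuclideanSpace.norm_single]
    exact (abs_nonneg _).trans (hM _ hx)
  have hgk : ∀ z : EuclideanSpace ℝ (Fin n), z ≠ 0 → |g z| ≤ M * ‖z‖ ^ (α - n) := by
    intro z hz
    have hnz : ‖z‖ ≠ 0 := norm_ne_zero_iff.2 hz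
    have hunit : ‖‖z‖⁻¹ • z‖ = 1 := by
      rw [norm_smul, norm_inv, norm_norm, inv_mul_cancel₀ hnz]
    rw [hg_hom z hz, abs_mul, abs_of_nonneg (Real.rpow_nonneg (norm_nonneg z) _)]
    exact mul_le_mul_of_nonneg_right (hM _ hunit) (Real.rpow_nonneg (norm_nonneg z) _)
  set A1 := ∫⁻ z in Metric.ball (0 : EuclideanSpace ℝ (Fin n)) 1, rieszKer n α z with hA1
  have hA1top : A1 ≠ ⊤ := (rieszKer_ball_one_lt_top hα hαn).ne
  set c1 := A1.toReal with hc1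
  have hc1nn : 0 ≤ c1 := ENNReal.toReal_nonneg
  have hA1eq : A1 = ENNReal.ofReal c1 := (ENNReal.ofReal_toReal hA1top).symm
  refine ⟨(M + 1) * (c1 + 1), by positivity, ?_⟩
  intro f κ E hκnn hf hsupp hE hEfin
  -- pass to a strongly measurable representative
  have hfaesm := hf.1
  set f' := hfaesm.mk f with hf'def
  have hff' : f =ᵐ[volume] f' := hfaesm.ae_eq_mk
  have hsm : StronglyMeasurable f' := hfaesm.stronglyMeasurable_mk
  have hf'm : Measurable f' := hsm.measurable
  have hTg : ∀ x, Tg g f x = Tg g f' x := fun x =>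
    integral_congr_ae (hff'.mono fun y hy => by simp only [hy])
  have hLp : eLpNorm f (ENNReal.ofReal ((n:ℝ) / α)) volume
      = eLpNorm f' (ENNReal.ofReal ((n:ℝ) / α)) volume := eLpNorm_congr_ae hff'
  have hf'2 : MemLp f' (ENNReal.ofReal ((n:ℝ) / α)) volume := hf.ae_eq hff'
  have hsupp' : volume (Function.support f') ≤ ENNReal.ofReal κ := by
    have hsub : Function.support f' ⊆ Function.support f ∪ {y | f y ≠ f' y} := by
      intro y hy
      by_cases h : f y = f' y
      · left
        rw [Function.mem_support] at hy ⊢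
        rw [h]; exact hy
      · right; exact h
    have h0 : volume {y | f y ≠ f' y} = 0 := by
      have := hff'
      rw [Filter.EventuallyEq, ae_iff] at this
      exact this
    calc volume (Function.support f')
        ≤ volume (Function.support f ∪ {y | f y ≠ f' y}) := measure_mono hsub
      _ ≤ volume (Function.support f) + volume {y | f y ≠ f' y} := measure_union_le _ _
      _ ≤ ENNReal.ofReal κ := by rw [h0, add_zero]; exact hsupp
  simp only [hTg, hLp]
  rcases eq_or_lt_of_le hκnn with hκ0 | hκpos
  · -- κ = 0 : f vanishes a.e., so the potential is zero
    have hsupp0 : volume (Function.support f') = 0 := by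
      rw [← hκ0] at hsupp'
      simpa using hsupp'
    have hf0 : f' =ᵐ[volume] 0 := by
      rw [Filter.EventuallyEq, ae_iff]
      simpa [Function.support] using hsupp0
    have hTg0 : ∀ x, Tg g f' x = 0 := by
      intro x
      show (∫ y, g (x - y) * f' y) = 0
      have : (fun y => g (x - y) * f' y) =ᵐ[volume] 0 :=
        hf0.mono fun y hy => by simp [hy]
      rw [integral_congr_ae this]
      simp
    have hz : (∫⁻ x in E, ENNReal.ofReal (|Tg g f' x| ^ ((n:ℝ) / α))) = 0 := by
      have : ∀ x, ENNReal.ofReal (|Tg g f' x| ^ ((n:ℝ) / α)) = 0 := by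
        intro x
        rw [hTg0 x, abs_zero, Real.zero_rpow (by positivity : ((n:ℝ) / α) ≠ 0)]
        simp
      simp [this]
    rw [hz, ENNReal.zero_rpow_of_pos (by positivity : (0:ℝ) < α / (n:ℝ))]
    exact zero_le
  · -- κ > 0 : main estimate
    refine (core_estimate hα hαn hM0 hgk hf'm hκpos hf'2 hsupp' E hE hEfin).trans ?_
    set L := eLpNorm f' (ENNReal.ofReal ((n:ℝ) / α)) volume with hL
    have hLtop : L ≠ ⊤ := hf'2.2.ne
    have hLeq : L = ENNReal.ofReal L.toReal := (ENNReal.ofReal_toReal hLtop).symm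
    have hVeq : (volume E) ^ (α / (n:ℝ))
        = ENNReal.ofReal ((volume E).toReal ^ (α / (n:ℝ))) := by
      conv_lhs => rw [← ENNReal.ofReal_toReal hEfin.ne]
      rw [ENNReal.ofReal_rpow_of_nonneg ENNReal.toReal_nonneg (by positivity)]
    rw [← hA1, hA1eq, hVeq]
    rw [hLeq]
    rw [← ENNReal.ofReal_mul hc1nn, ← ENNReal.ofReal_add (by positivity) (by positivity),
      ← ENNReal.ofReal_mul (by positivity), ← ENNReal.ofReal_mul hM0]
    refine ENNReal.ofReal_le_ofReal ?_
    rw [ENNReal.toReal_ofReal ENNReal.toReal_nonneg]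
    set K := κ ^ (α / (n:ℝ)) with hK
    set V := (volume E).toReal ^ (α / (n:ℝ)) with hV
    have hKnn : 0 ≤ K := Real.rpow_nonneg hκnn _
    have hVnn : 0 ≤ V := Real.rpow_nonneg ENNReal.toReal_nonneg _
    have hLnn : 0 ≤ L.toReal := ENNReal.toReal_nonneg
    nlinarith [mul_nonneg (mul_nonneg hM0 hc1nn) (mul_nonneg hVnn hLnn),
      mul_nonneg hVnn hLnn, mul_nonneg hKnn hLnn,
      mul_nonneg (mul_nonneg hc1nn hKnn) hLnn,
      mul_nonneg (mul_nonneg hM0 hVnn) hLnn,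
      mul_nonneg (mul_nonneg hM0 hKnn) hLnn,
      mul_nonneg (mul_nonneg hc1nn hVnn) hLnn]
end

section
/- Let Ω ⊆ ℝⁿ be a measurable set with finite measure, n ≥ 2, and suppose the Chang–Yang–Cianchi inequality holds: there is C₁ such that ∫_Ω exp(2^{−1/(n−1)} γ |u − ū|^{n/(n−1)}) dx ≤ C₁ for all u ∈ W^{1,n}(Ω) with ‖∇u‖_n ≤ 1, where ū = |Ω|^{−1}∫_Ω u and γ > 0 is a constant. Then there is C₂ = C₂(C₁, γ, n, |Ω|) such that ∫_Ω exp(2^{−1/(n−1)} γ |u|^{n/(n−1)}) dx ≤ C₂ for all u ∈ W^{1,n}(Ω) with ‖u‖_n^n + ‖∇u‖_n^n ≤ 1. -/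
open Real MeasureTheory ENNReal

private lemma convex2 {w₁ w₂ z₁ z₂ p : ℝ} (hw₁ : 0 ≤ w₁) (hw₂ : 0 ≤ w₂) (hz₁ : 0 ≤ z₁)
    (hz₂ : 0 ≤ z₂) (hw : w₁ + w₂ = 1) (hp : 1 ≤ p) :
    (w₁ * z₁ + w₂ * z₂) ^ p ≤ w₁ * z₁ ^ p + w₂ * z₂ ^ p := by
  have h := NNReal.rpow_arith_mean_le_arith_mean2_rpow ⟨w₁, hw₁⟩ ⟨w₂, hw₂⟩ ⟨z₁, hz₁⟩ ⟨z₂, hz₂⟩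
    (by ext; exact hw) hp
  have h2 := (NNReal.coe_le_coe).2 h
  push_cast at h2
  exact h2

private lemma keyIneq {N s a b θ : ℝ} (hN : 2 ≤ N) (hs : 0 ≤ s) (ha : 0 ≤ a) (hb : 0 ≤ b)
    (hθ0 : 0 < θ) (hθ1 : θ ≤ 1)
    (hle : s ≤ a * θ ^ (N⁻¹) + b * (1 - θ) ^ (N⁻¹)) :
    s ^ (N / (N - 1)) ≤ a ^ (N / (N - 1)) + b ^ (N / (N - 1)) := by
  have hN0 : (0:ℝ) < N := by linarith
  have hN1 : (0:ℝ) < N - 1 := by linarith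
  have hq1 : 1 ≤ N / (N - 1) := by rw [le_div_iff₀ hN1]; linarith
  have hq0 : 0 ≤ N / (N - 1) := by linarith
  set q := N / (N - 1) with hqdef
  rcases eq_or_lt_of_le hθ1 with h1 | h1
  · rw [h1, sub_self, Real.one_rpow, Real.zero_rpow (by positivity : N⁻¹ ≠ 0)] at hle
    have hsa : s ≤ a := by linarith
    calc s ^ q ≤ a ^ q := Real.rpow_le_rpow hs hsa hq0
      _ ≤ a ^ q + b ^ q := le_add_of_nonneg_right (Real.rpow_nonneg hb q)
  · have h1θ : 0 < 1 - θ := by linarith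
    have e1 : θ * (a * θ ^ (N⁻¹ - 1)) = a * θ ^ (N⁻¹) := by
      rw [show θ ^ (N⁻¹) = θ ^ (1 + (N⁻¹ - 1)) by ring_nf, Real.rpow_add hθ0, Real.rpow_one]
      ring
    have e2 : (1 - θ) * (b * (1 - θ) ^ (N⁻¹ - 1)) = b * (1 - θ) ^ (N⁻¹) := by
      rw [show (1-θ) ^ (N⁻¹) = (1-θ) ^ (1 + (N⁻¹ - 1)) by ring_nf, Real.rpow_add h1θ,
        Real.rpow_one]
      ring
    have hexp : (N⁻¹ - 1) * q = -1 := by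
      rw [hqdef]; field_simp; ring
    have t1 : θ * (a * θ ^ (N⁻¹ - 1)) ^ q = a ^ q := by
      rw [Real.mul_rpow ha (Real.rpow_nonneg hθ0.le _), ← Real.rpow_mul hθ0.le, hexp,
        Real.rpow_neg_one, mul_comm (a ^ q) θ⁻¹, ← mul_assoc, mul_inv_cancel₀ hθ0.ne', one_mul]
    have t2 : (1 - θ) * (b * (1 - θ) ^ (N⁻¹ - 1)) ^ q = b ^ q := by
      rw [Real.mul_rpow hb (Real.rpow_nonneg h1θ.le _), ← Real.rpow_mul h1θ.le, hexp,
        Real.rpow_neg_one, mul_comm (b ^ q) (1-θ)⁻¹, ← mul_assoc, mul_inv_cancel₀ h1θ.ne',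
        one_mul]
    have key := convex2 hθ0.le h1θ.le
      (by positivity : (0:ℝ) ≤ a * θ ^ (N⁻¹ - 1))
      (by positivity : (0:ℝ) ≤ b * (1 - θ) ^ (N⁻¹ - 1)) (by ring) hq1
    calc s ^ q ≤ (a * θ ^ (N⁻¹) + b * (1 - θ) ^ (N⁻¹)) ^ q := by
          apply Real.rpow_le_rpow hs hle hq0
      _ = (θ * (a * θ ^ (N⁻¹ - 1)) + (1 - θ) * (b * (1 - θ) ^ (N⁻¹ - 1))) ^ q := by
          rw [e1, e2]
      _ ≤ θ * (a * θ ^ (N⁻¹ - 1)) ^ q + (1 - θ) * (b * (1 - θ) ^ (N⁻¹ - 1)) ^ q := key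
      _ = a ^ q + b ^ q := by rw [t1, t2]

set_option maxHeartbeats 1000000 in
/-- Theorem 23 of Fontana–Morpurgo: the Chang–Yang–Cianchi inequality (for mean-zero
normalization) implies a sharp Trudinger inequality on a bounded domain under the full
Sobolev norm condition `‖u‖ₙⁿ + ‖∇u‖ₙⁿ ≤ 1`, without boundary conditions. -/
theorem stmt19 (n : ℕ) (hn : 2 ≤ n) (Ω : Set (EuclideanSpace ℝ (Fin n)))
    (hΩ : MeasurableSet Ω) (hΩfin : volume Ω < ⊤) (hΩpos : 0 < volume Ω)
    (γ : ℝ) (hγ : 0 < γ) (C₁ : ℝ)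
    (hCYC : ∀ u : EuclideanSpace ℝ (Fin n) → ℝ, Differentiable ℝ u →
      MemLp u (n : ℝ≥0∞) (volume.restrict Ω) →
      MemLp (fun x => ‖fderiv ℝ u x‖) (n : ℝ≥0∞) (volume.restrict Ω) →
      (eLpNorm (fun x => ‖fderiv ℝ u x‖) (n : ℝ≥0∞) (volume.restrict Ω)).toReal ≤ 1 →
      ∫⁻ x in Ω,
          ENNReal.ofReal
            (exp ((2 : ℝ) ^ (-(1 / ((n : ℝ) - 1))) * γ *
              |u x - (volume Ω).toReal⁻¹ * ∫ y in Ω, u y| ^ ((n : ℝ) / ((n : ℝ) - 1))))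
        ≤ ENNReal.ofReal C₁) :
    ∃ C₂ : ℝ, ∀ u : EuclideanSpace ℝ (Fin n) → ℝ, Differentiable ℝ u →
      MemLp u (n : ℝ≥0∞) (volume.restrict Ω) →
      MemLp (fun x => ‖fderiv ℝ u x‖) (n : ℝ≥0∞) (volume.restrict Ω) →
      (eLpNorm u (n : ℝ≥0∞) (volume.restrict Ω)).toReal ^ (n : ℝ) +
          (eLpNorm (fun x => ‖fderiv ℝ u x‖) (n : ℝ≥0∞) (volume.restrict Ω)).toReal ^ (n : ℝ)
        ≤ 1 →
      ∫⁻ x in Ω,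
          ENNReal.ofReal
            (exp ((2 : ℝ) ^ (-(1 / ((n : ℝ) - 1))) * γ *
              |u x| ^ ((n : ℝ) / ((n : ℝ) - 1))))
        ≤ ENNReal.ofReal C₂ := by
  haveI hfin : IsFiniteMeasure (volume.restrict Ω) :=
    ⟨by rw [Measure.restrict_apply_univ]; exact hΩfin⟩
  have hn2 : (2:ℝ) ≤ (n:ℝ) := by exact_mod_cast hn
  set nr : ℝ := (n:ℝ) with hnr
  have hnpos : (0:ℝ) < nr := by linarith
  have hn1 : (0:ℝ) < nr - 1 := by linarith
  set q : ℝ := nr / (nr - 1) with hq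
  have hq1 : 1 ≤ q := by rw [hq, le_div_iff₀ hn1]; linarith
  have hq0 : 0 < q := by linarith
  set c : ℝ := (2:ℝ) ^ (-(1 / (nr - 1))) * γ with hc
  have hc0 : 0 < c := by positivity
  set M : ℝ := (volume Ω).toReal with hM
  have hM0 : 0 < M := ENNReal.toReal_pos hΩpos.ne' hΩfin.ne
  set b : ℝ := M ^ (-(nr⁻¹)) with hb
  have hb0 : 0 < b := Real.rpow_pos_of_pos hM0 _
  set B : ℝ := b ^ q with hB
  have hB0 : 0 < B := Real.rpow_pos_of_pos hb0 _
  set K : ℝ := (2:ℝ) ^ ((nr - 1)⁻¹) with hK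
  have hK1 : 1 ≤ K := Real.one_le_rpow one_le_two (by positivity)
  have hone_le : (1:ℝ≥0∞) ≤ (n : ℝ≥0∞) := by exact_mod_cast (by omega : 1 ≤ n)
  -- C₁ is positive
  have hC₁ : 0 < C₁ := by
    have hfd0 : (fun x : EuclideanSpace ℝ (Fin n) => ‖fderiv ℝ (fun _ => (0:ℝ)) x‖)
        = fun _ => (0:ℝ) := by
      funext x; simp
    have h0 := hCYC (fun _ => 0) (differentiable_const 0) (memLp_const 0)
      (by rw [hfd0]; exact memLp_const 0)
      (by rw [hfd0]; simp [eLpNorm_zero'])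
    simp only [integral_zero, mul_zero, sub_zero, abs_zero] at h0
    rw [Real.zero_rpow (by positivity : q ≠ 0)] at h0
    simp only [mul_zero, Real.exp_zero, ENNReal.ofReal_one] at h0
    rw [setLIntegral_one] at h0
    have : (0:ℝ≥0∞) < ENNReal.ofReal C₁ := lt_of_lt_of_le hΩpos h0
    exact ENNReal.ofReal_pos.mp this
  refine ⟨C₁ * Real.exp (c * (K * B)), ?_⟩
  intro u hdiff hmem hmem' hnorm
  set T := eLpNorm (fun x => ‖fderiv ℝ u x‖) (n : ℝ≥0∞) (volume.restrict Ω) with hT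
  set t : ℝ := T.toReal with ht
  set Nv : ℝ := (eLpNorm u (n : ℝ≥0∞) (volume.restrict Ω)).toReal with hNv
  have ht0 : 0 ≤ t := ENNReal.toReal_nonneg
  have hNv0 : 0 ≤ Nv := ENNReal.toReal_nonneg
  set ub : ℝ := M⁻¹ * ∫ y in Ω, u y with hub
  -- mean value bound
  have hmean : |ub| ≤ b * Nv := by
    have hinth : Integrable u (volume.restrict Ω) := hmem.integrable hone_le
    have h1 : eLpNorm u 1 (volume.restrict Ω)
        ≤ eLpNorm u (n : ℝ≥0∞) (volume.restrict Ω) * (volume Ω) ^ (1 - nr⁻¹) := by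
      have := eLpNorm_le_eLpNorm_mul_rpow_measure_univ (μ := volume.restrict Ω)
        (p := 1) (q := (n : ℝ≥0∞)) hone_le hmem.aestronglyMeasurable
      have e : 1 / ENNReal.toReal 1 - 1 / ((n : ℝ≥0∞)).toReal = 1 - nr⁻¹ := by
        rw [ENNReal.toReal_one, ENNReal.toReal_natCast, hnr]
        norm_num
      rwa [Measure.restrict_apply_univ, e] at this
    have hinvle : nr⁻¹ ≤ 1 := by
      rw [inv_le_one_iff₀]
      right; linarith
    have hfin1 : eLpNorm u (n : ℝ≥0∞) (volume.restrict Ω) * (volume Ω) ^ (1 - nr⁻¹) ≠ ⊤ := by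
      apply ENNReal.mul_ne_top hmem.eLpNorm_ne_top
      exact (ENNReal.rpow_lt_top_of_nonneg (by linarith) hΩfin.ne).ne
    have h1' : (eLpNorm u 1 (volume.restrict Ω)).toReal ≤ Nv * M ^ (1 - nr⁻¹) := by
      have := ENNReal.toReal_mono hfin1 h1
      rwa [ENNReal.toReal_mul, ← ENNReal.toReal_rpow] at this
    have h2 : |∫ y in Ω, u y| ≤ (eLpNorm u 1 (volume.restrict Ω)).toReal := by
      rw [eLpNorm_one_eq_lintegral_enorm]
      calc |∫ y in Ω, u y| ≤ ∫ y in Ω, ‖u y‖ := by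
            rw [← Real.norm_eq_abs]; exact norm_integral_le_integral_norm u
        _ = (∫⁻ y in Ω, ‖u y‖ₑ ∂volume).toReal := integral_norm_eq_lintegral_enorm hmem.1
    have hbN : M⁻¹ * (Nv * M ^ (1 - nr⁻¹)) = b * Nv := by
      rw [hb, ← Real.rpow_neg_one M]
      rw [show M ^ (-(1:ℝ)) * (Nv * M ^ (1 - nr⁻¹)) = Nv * (M ^ (-(1:ℝ)) * M ^ (1 - nr⁻¹))
        by ring, ← Real.rpow_add hM0, show -1 + (1 - nr⁻¹) = -(nr⁻¹) by ring]
      ring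
    calc |ub| = M⁻¹ * |∫ y in Ω, u y| := by
          rw [hub, abs_mul, abs_of_pos (inv_pos.mpr hM0)]
      _ ≤ M⁻¹ * (Nv * M ^ (1 - nr⁻¹)) := by
          apply mul_le_mul_of_nonneg_left (h2.trans h1') (inv_pos.mpr hM0).le
      _ = b * Nv := hbN
  -- scaled application of the hypothesis
  have scaled : ∀ r : ℝ, 0 < r → r * t ≤ 1 →
      ∫⁻ x in Ω, ENNReal.ofReal (Real.exp (c * (r * |u x - ub|) ^ q)) ≤ ENNReal.ofReal C₁ := by
    intro r hr hrt
    have hdv : Differentiable ℝ (fun x => r * u x) := hdiff.const_mul r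
    have hfdn : (fun x => ‖fderiv ℝ (fun x => r * u x) x‖)
        = fun x => r * ‖fderiv ℝ u x‖ := by
      funext x
      rw [fderiv_const_mul (hdiff.differentiableAt) r, norm_smul, Real.norm_eq_abs,
        abs_of_pos hr]
    have hm1 : MemLp (fun x => r * u x) (n:ℝ≥0∞) (volume.restrict Ω) := hmem.const_mul r
    have hm2 : MemLp (fun x => ‖fderiv ℝ (fun x => r * u x) x‖) (n:ℝ≥0∞)
        (volume.restrict Ω) := by rw [hfdn]; exact hmem'.const_mul r
    have helb : (eLpNorm (fun x => ‖fderiv ℝ (fun x => r * u x) x‖) (n:ℝ≥0∞)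
        (volume.restrict Ω)).toReal ≤ 1 := by
      rw [hfdn]
      have : (fun x => r * ‖fderiv ℝ u x‖) = r • (fun x => ‖fderiv ℝ u x‖) := rfl
      rw [this, eLpNorm_const_smul, ENNReal.toReal_mul, toReal_enorm,
        Real.norm_eq_abs, abs_of_pos hr]
      exact hrt
    have happ := hCYC (fun x => r * u x) hdv hm1 hm2 helb
    have hcong : ∀ x, ENNReal.ofReal (Real.exp (c * (r * |u x - ub|) ^ q))
        = ENNReal.ofReal (Real.exp (c * |r * u x - M⁻¹ * ∫ y in Ω, r * u y| ^ q)) := by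
      intro x
      congr 2
      rw [integral_const_mul, hub]
      rw [show r * u x - M⁻¹ * (r * ∫ y in Ω, u y) = r * (u x - M⁻¹ * ∫ y in Ω, u y) by ring,
        abs_mul, abs_of_pos hr]
    calc ∫⁻ x in Ω, ENNReal.ofReal (Real.exp (c * (r * |u x - ub|) ^ q))
        = ∫⁻ x in Ω, ENNReal.ofReal
            (Real.exp (c * |r * u x - M⁻¹ * ∫ y in Ω, r * u y| ^ q)) := by
          apply lintegral_congr; intro x; exact hcong x
      _ ≤ ENNReal.ofReal C₁ := happ
  -- final estimate, two cases
  have habs : ∀ x, |u x| ≤ |u x - ub| + |ub| := fun x => by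
    calc |u x| = |(u x - ub) + ub| := by ring_nf
      _ ≤ |u x - ub| + |ub| := abs_add_le _ _
  rcases eq_or_lt_of_le ht0 with htz | htpos
  · -- t = 0 case
    have hNle : Nv ≤ 1 := by
      have h1 : Nv ^ nr ≤ 1 := by nlinarith [Real.rpow_nonneg ht0 nr]
      have := Real.rpow_le_rpow (Real.rpow_nonneg hNv0 nr) h1 (by positivity : (0:ℝ) ≤ nr⁻¹)
      rwa [← Real.rpow_mul hNv0, mul_inv_cancel₀ hnpos.ne', Real.rpow_one,
        Real.one_rpow] at this
    set r : ℝ := (2:ℝ) ^ (nr⁻¹) with hr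
    have hrpos : (0:ℝ) < r := by positivity
    have hrq : r ^ q = K := by
      rw [hr, hK, ← Real.rpow_mul (by norm_num : (0:ℝ) ≤ 2)]
      congr 1
      rw [hq]; field_simp
    have hSc := scaled r hrpos (by rw [← htz, mul_zero]; norm_num)
    have hkey : ∀ x, |u x| ^ q ≤ (r * |u x - ub|) ^ q + K * B := by
      intro x
      have hs : |u x| ≤ (r * |u x - ub|) * ((1:ℝ)/2) ^ (nr⁻¹) + (r * b) * (1 - 1/2) ^ (nr⁻¹) := by
        have hhalf : r * ((1:ℝ)/2) ^ (nr⁻¹) = 1 := by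
          rw [hr, show (1:ℝ)/2 = 2⁻¹ by norm_num, ← Real.rpow_neg_one (2:ℝ),
            ← Real.rpow_mul (by norm_num : (0:ℝ) ≤ 2), ← Real.rpow_add (by norm_num : (0:ℝ) < 2)]
          norm_num
        have e : ∀ z : ℝ, (r * z) * ((1:ℝ)/2) ^ (nr⁻¹) = z := by
          intro z
          calc (r * z) * ((1:ℝ)/2) ^ (nr⁻¹) = z * (r * ((1:ℝ)/2) ^ (nr⁻¹)) := by ring
            _ = z := by rw [hhalf, mul_one]
        rw [show (1:ℝ) - 1/2 = 1/2 by norm_num, e, e]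
        calc |u x| ≤ |u x - ub| + |ub| := habs x
          _ ≤ |u x - ub| + b := by
              have : |ub| ≤ b := by
                calc |ub| ≤ b * Nv := hmean
                  _ ≤ b * 1 := mul_le_mul_of_nonneg_left hNle hb0.le
                  _ = b := mul_one b
              linarith
      have := keyIneq hn2 (abs_nonneg _) (by positivity) (by positivity)
        (by norm_num : (0:ℝ) < 1/2) (by norm_num) hs
      rw [← hq] at this
      calc |u x| ^ q ≤ (r * |u x - ub|) ^ q + (r * b) ^ q := this
        _ = (r * |u x - ub|) ^ q + K * B := by
            rw [Real.mul_rpow hrpos.le hb0.le, hrq, hB]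
    calc ∫⁻ x in Ω, ENNReal.ofReal (Real.exp (c * |u x| ^ q))
        ≤ ∫⁻ x in Ω, ENNReal.ofReal
            (Real.exp (c * (K * B)) * Real.exp (c * (r * |u x - ub|) ^ q)) := by
          apply lintegral_mono; intro x
          apply ENNReal.ofReal_le_ofReal
          rw [← Real.exp_add]
          apply Real.exp_le_exp.2
          nlinarith [hkey x, hc0.le]
      _ = ENNReal.ofReal (Real.exp (c * (K * B)))
          * ∫⁻ x in Ω, ENNReal.ofReal (Real.exp (c * (r * |u x - ub|) ^ q)) := by
          simp_rw [ENNReal.ofReal_mul (Real.exp_nonneg _)]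
          rw [lintegral_const_mul' _ _ ENNReal.ofReal_ne_top]
      _ ≤ ENNReal.ofReal (Real.exp (c * (K * B))) * ENNReal.ofReal C₁ := by
          exact mul_le_mul_right hSc _
      _ ≤ ENNReal.ofReal (C₁ * Real.exp (c * (K * B))) := by
          rw [← ENNReal.ofReal_mul (Real.exp_nonneg _), mul_comm]
  · -- t > 0 case
    have hθpos : (0:ℝ) < t ^ nr := Real.rpow_pos_of_pos htpos _
    have hθ1 : t ^ nr ≤ 1 := by nlinarith [Real.rpow_nonneg hNv0 nr]
    have hSc := scaled t⁻¹ (inv_pos.mpr htpos) (by rw [inv_mul_cancel₀ htpos.ne'])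
    have hkey : ∀ x, |u x| ^ q ≤ (t⁻¹ * |u x - ub|) ^ q + B := by
      intro x
      have e1 : (t ^ nr) ^ (nr⁻¹) = t := by
        rw [← Real.rpow_mul htpos.le, mul_inv_cancel₀ hnpos.ne', Real.rpow_one]
      have e2 : Nv ≤ (1 - t ^ nr) ^ (nr⁻¹) := by
        have h1 : Nv ^ nr ≤ 1 - t ^ nr := by linarith
        have := Real.rpow_le_rpow (Real.rpow_nonneg hNv0 nr) h1
          (by positivity : (0:ℝ) ≤ nr⁻¹)
        rwa [← Real.rpow_mul hNv0, mul_inv_cancel₀ hnpos.ne', Real.rpow_one] at this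
      have hs : |u x| ≤ (t⁻¹ * |u x - ub|) * (t ^ nr) ^ (nr⁻¹)
          + b * (1 - t ^ nr) ^ (nr⁻¹) := by
        rw [e1]
        calc |u x| ≤ |u x - ub| + |ub| := habs x
          _ ≤ t⁻¹ * |u x - ub| * t + b * (1 - t ^ nr) ^ (nr⁻¹) := by
              have h3 : t⁻¹ * |u x - ub| * t = |u x - ub| := by
                field_simp
              rw [h3]
              have h4 : |ub| ≤ b * (1 - t ^ nr) ^ (nr⁻¹) :=
                hmean.trans (mul_le_mul_of_nonneg_left e2 hb0.le)
              linarith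
      have := keyIneq hn2 (abs_nonneg _) (by positivity) hb0.le hθpos hθ1 hs
      rw [← hq] at this
      calc |u x| ^ q ≤ (t⁻¹ * |u x - ub|) ^ q + b ^ q := this
        _ = (t⁻¹ * |u x - ub|) ^ q + B := by rw [hB]
    calc ∫⁻ x in Ω, ENNReal.ofReal (Real.exp (c * |u x| ^ q))
        ≤ ∫⁻ x in Ω, ENNReal.ofReal
            (Real.exp (c * B) * Real.exp (c * (t⁻¹ * |u x - ub|) ^ q)) := by
          apply lintegral_mono; intro x
          apply ENNReal.ofReal_le_ofReal
          rw [← Real.exp_add]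
          apply Real.exp_le_exp.2
          nlinarith [hkey x, hc0.le]
      _ = ENNReal.ofReal (Real.exp (c * B))
          * ∫⁻ x in Ω, ENNReal.ofReal (Real.exp (c * (t⁻¹ * |u x - ub|) ^ q)) := by
          simp_rw [ENNReal.ofReal_mul (Real.exp_nonneg _)]
          rw [lintegral_const_mul' _ _ ENNReal.ofReal_ne_top]
      _ ≤ ENNReal.ofReal (Real.exp (c * B)) * ENNReal.ofReal C₁ := by
          exact mul_le_mul_right hSc _
      _ ≤ ENNReal.ofReal (C₁ * Real.exp (c * (K * B))) := by
          rw [← ENNReal.ofReal_mul (Real.exp_nonneg _)]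
          apply ENNReal.ofReal_le_ofReal
          rw [mul_comm (Real.exp (c * B)) C₁]
          apply mul_le_mul_of_nonneg_left _ hC₁.le
          apply Real.exp_le_exp.2
          nlinarith [mul_nonneg hc0.le hB0.le, hK1]
end
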